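/- arXiv:1503.09012 — 4 statements merged into one kernel-verified Lean document; each statement's English description precedes it below -/
import Mathlib

section
/- Let T be a finite tree with vertex set V, plumbing matrix A, dual vectors E*_v, and for each nonempty J ⊆ V with T_J a subtree, there exists a positive definite rational symmetric matrix Ã_J, with Ã_J having the same off-diagonal pattern as the tree T_J (entries −1 on edges of T_J in the integer case relaxed to the same sparsity pattern), such that [π_J(E*_j)]_{j∈J} · Ã_J = [E_j]_{j∈J}, where π_J : V ⊗ R → R⟨E_j⟩_{j∈J} is the coordinate projection along R⟨E_v⟩_{v∉J}. -/
open scoped Classical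
open Matrix

set_option maxHeartbeats 1000000

namespace Stmt11Aux

variable {V : Type*} [Fintype V] [DecidableEq V]

/-- symmetric + positive definite quadratic form (no star, over ℚ). -/
def Good (M : Matrix V V ℚ) : Prop :=
  M.IsSymm ∧ ∀ x : V → ℚ, x ≠ 0 → 0 < dotProduct x (M.mulVec x)

theorem Good.det_ne_zero {M : Matrix V V ℚ} (h : Good M) : M.det ≠ 0 := by
  intro hdet
  obtain ⟨v, hv, hMv⟩ := Matrix.exists_mulVec_eq_zero_iff.2 hdet
  have := h.2 v hv
  rw [hMv] at this
  simp [dotProduct] at this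

theorem Good.isUnit_det {M : Matrix V V ℚ} (h : Good M) : IsUnit M.det :=
  isUnit_iff_ne_zero.2 h.det_ne_zero

theorem Good.inv {M : Matrix V V ℚ} (h : Good M) : Good M⁻¹ := by
  constructor
  · show (M⁻¹)ᵀ = M⁻¹
    rw [Matrix.transpose_nonsing_inv, h.1]
  · intro x hx
    have hmm : M *ᵥ (M⁻¹ *ᵥ x) = x := by
      rw [Matrix.mulVec_mulVec, Matrix.mul_nonsing_inv _ h.isUnit_det, Matrix.one_mulVec]
    set y := M⁻¹ *ᵥ x with hy
    have hyne : y ≠ 0 := by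
      intro h0
      rw [h0, Matrix.mulVec_zero] at hmm
      exact hx hmm.symm
    calc (0:ℚ) < dotProduct y (M *ᵥ y) := h.2 y hyne
      _ = dotProduct (M *ᵥ y) y := dotProduct_comm _ _
      _ = dotProduct x y := by rw [hmm]

theorem Good.submatrix {n : Type*} [Fintype n] [DecidableEq n] {M : Matrix V V ℚ}
    (h : Good M) (f : n → V) (hf : Function.Injective f) :
    Good (M.submatrix f f) := by
  constructor
  · show _ = _
    ext a b
    simpa using (congrFun (congrFun h.1 (f b)) (f a)).symm
  · intro x hx
    set xh : V → ℚ := fun v => if hv : ∃ a, f a = v then x (Classical.choose hv) else 0 with hxh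
    have hxf : ∀ a : n, xh (f a) = x a := by
      intro a
      have he : ∃ b, f b = f a := ⟨a, rfl⟩
      rw [hxh]
      simp only [dif_pos he]
      congr 1
      exact hf (Classical.choose_spec he)
    have hxhne : xh ≠ 0 := by
      intro h0
      apply hx
      funext a
      have := congrFun h0 (f a)
      rwa [hxf a] at this
    have hzero : ∀ v : V, v ∉ Finset.univ.image f → xh v = 0 := by
      intro v hv
      rw [hxh]
      have : ¬ ∃ a, f a = v := by
        rintro ⟨a, rfl⟩
        exact hv (Finset.mem_image_of_mem f (Finset.mem_univ a))
      simp [this]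
    have hinj : ∀ a ∈ Finset.univ, ∀ b ∈ Finset.univ, f a = f b → a = b :=
      fun a _ b _ hab => hf hab
    have hsum : ∀ g : V → ℚ, (∀ v ∉ Finset.univ.image f, g v = 0) →
        ∑ v : V, g v = ∑ a : n, g (f a) := by
      intro g hg
      rw [← Finset.sum_subset (Finset.subset_univ (Finset.univ.image f))
        (fun v _ hv => hg v hv)]
      exact Finset.sum_image hinj
    have inner : ∀ v : V, (M.mulVec xh) v = ∑ b : n, M v (f b) * x b := by
      intro v
      show ∑ w : V, M v w * xh w = _
      rw [hsum (fun w => M v w * xh w) (fun w hw => by simp [hzero w hw])]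
      exact Finset.sum_congr rfl fun b _ => by rw [hxf b]
    have key : dotProduct x ((M.submatrix f f).mulVec x)
        = dotProduct xh (M.mulVec xh) := by
      show _ = ∑ v : V, xh v * (M.mulVec xh) v
      rw [hsum (fun v => xh v * (M.mulVec xh) v) (fun v hv => by simp [hzero v hv])]
      refine (Finset.sum_congr rfl fun a _ => ?_).symm
      rw [inner (f a), hxf a]
      rfl
    rw [key]
    exact h.2 xh hxhne

variable (A : Matrix V V ℤ) (J : Finset V)

noncomputable def Qm : Matrix V V ℚ := A.map ((↑) : ℤ → ℚ)

noncomputable def Dm : Matrix {v // ¬ v ∈ J} {v // ¬ v ∈ J} ℚ :=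
  (Qm A).submatrix Subtype.val Subtype.val

noncomputable def Em : Matrix {v // ¬ v ∈ J} {v // ¬ v ∈ J} ℚ := (Dm A J)⁻¹

noncomputable def Smat : Matrix {v // v ∈ J} {v // v ∈ J} ℚ := fun j k =>
  Qm A j.1 k.1 - ∑ u : {v // ¬ v ∈ J}, ∑ w : {v // ¬ v ∈ J},
    Qm A j.1 u.1 * Em A J u w * Qm A w.1 k.1

theorem sum_split (f : V → ℚ) :
    (∑ l : {v // v ∈ J}, f l.1) + (∑ u : {v // ¬ v ∈ J}, f u.1) = ∑ v : V, f v := by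
  have h1 : ∑ v ∈ J, f v = ∑ l : {v // v ∈ J}, f l.1 :=
    Finset.sum_subtype J (fun _ => Iff.rfl) f
  have h2 : ∑ v ∈ Jᶜ, f v = ∑ l : {v // ¬ v ∈ J}, f l.1 :=
    Finset.sum_subtype Jᶜ (fun x => Finset.mem_compl) f
  rw [← h1, ← h2, Finset.sum_add_sum_compl]

theorem key_mul (hQ : Good (Qm A)) (hD : Good (Dm A J)) (j k : {v // v ∈ J}) :
    ∑ l : {v // v ∈ J}, (Qm A)⁻¹ j.1 l.1 * Smat A J l k = if j = k then 1 else 0 := by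
  set C := (Qm A)⁻¹ with hC
  have hCQ : C * Qm A = 1 := Matrix.nonsing_inv_mul _ hQ.isUnit_det
  have hDE : Dm A J * Em A J = 1 := Matrix.mul_nonsing_inv _ hD.isUnit_det
  have F1 : ∀ w : V,
      (∑ l : {v // v ∈ J}, C j.1 l.1 * Qm A l.1 w)
        + (∑ u : {v // ¬ v ∈ J}, C j.1 u.1 * Qm A u.1 w) = if j.1 = w then 1 else 0 := by
    intro w
    calc (∑ l : {v // v ∈ J}, C j.1 l.1 * Qm A l.1 w)
          + (∑ u : {v // ¬ v ∈ J}, C j.1 u.1 * Qm A u.1 w)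
        = ∑ v : V, C j.1 v * Qm A v w := sum_split J (fun v => C j.1 v * Qm A v w)
      _ = (C * Qm A) j.1 w := (Matrix.mul_apply).symm
      _ = if j.1 = w then 1 else 0 := by rw [hCQ, Matrix.one_apply]
  have F2 : ∀ u : {v // ¬ v ∈ J},
      ∑ l : {v // v ∈ J}, C j.1 l.1 * Qm A l.1 u.1
        = - ∑ w : {v // ¬ v ∈ J}, C j.1 w.1 * Qm A w.1 u.1 := by
    intro u
    have h1 := F1 u.1
    have hne : j.1 ≠ u.1 := fun h => u.2 (h ▸ j.2)
    rw [if_neg hne] at h1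
    linarith
  have F3 : ∀ w : {v // ¬ v ∈ J},
      ∑ u : {v // ¬ v ∈ J}, (∑ l : {v // v ∈ J}, C j.1 l.1 * Qm A l.1 u.1) * Em A J u w
        = - C j.1 w.1 := by
    intro w
    calc ∑ u : {v // ¬ v ∈ J}, (∑ l : {v // v ∈ J}, C j.1 l.1 * Qm A l.1 u.1) * Em A J u w
        = ∑ u : {v // ¬ v ∈ J},
            - ∑ t : {v // ¬ v ∈ J}, C j.1 t.1 * Dm A J t u * Em A J u w := by
          refine Finset.sum_congr rfl fun u _ => ?_
          rw [F2 u, neg_mul, Finset.sum_mul]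
          rfl
      _ = - ∑ u : {v // ¬ v ∈ J}, ∑ t : {v // ¬ v ∈ J},
            C j.1 t.1 * Dm A J t u * Em A J u w := by
          rw [Finset.sum_neg_distrib]
      _ = - ∑ t : {v // ¬ v ∈ J}, ∑ u : {v // ¬ v ∈ J},
            C j.1 t.1 * Dm A J t u * Em A J u w := by
          exact congrArg Neg.neg Finset.sum_comm
      _ = - ∑ t : {v // ¬ v ∈ J}, C j.1 t.1 *
            ∑ u : {v // ¬ v ∈ J}, Dm A J t u * Em A J u w := by
          refine congrArg Neg.neg (Finset.sum_congr rfl fun t _ => ?_)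
          rw [Finset.mul_sum]
          exact Finset.sum_congr rfl fun u _ => (mul_assoc _ _ _)
      _ = - ∑ t : {v // ¬ v ∈ J}, C j.1 t.1 * (1 : Matrix _ _ ℚ) t w := by
          refine congrArg Neg.neg (Finset.sum_congr rfl fun t _ => ?_)
          rw [← hDE, Matrix.mul_apply]
      _ = - C j.1 w.1 := by simp [Matrix.one_apply]
  have expand : ∑ l : {v // v ∈ J}, C j.1 l.1 * Smat A J l k
      = (∑ l : {v // v ∈ J}, C j.1 l.1 * Qm A l.1 k.1)
        - ∑ l : {v // v ∈ J}, ∑ u : {v // ¬ v ∈ J}, ∑ w : {v // ¬ v ∈ J},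
            C j.1 l.1 * (Qm A l.1 u.1 * Em A J u w * Qm A w.1 k.1) := by
    rw [← Finset.sum_sub_distrib]
    refine Finset.sum_congr rfl fun l _ => ?_
    show C j.1 l.1 * (Qm A l.1 k.1 - ∑ u, ∑ w, Qm A l.1 u.1 * Em A J u w * Qm A w.1 k.1) = _
    rw [mul_sub, Finset.mul_sum]
    congr 1
    exact Finset.sum_congr rfl fun u _ => Finset.mul_sum _ _ _
  have triple : ∑ l : {v // v ∈ J}, ∑ u : {v // ¬ v ∈ J}, ∑ w : {v // ¬ v ∈ J},
        C j.1 l.1 * (Qm A l.1 u.1 * Em A J u w * Qm A w.1 k.1)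
      = - ∑ w : {v // ¬ v ∈ J}, C j.1 w.1 * Qm A w.1 k.1 := by
    calc ∑ l : {v // v ∈ J}, ∑ u : {v // ¬ v ∈ J}, ∑ w : {v // ¬ v ∈ J},
          C j.1 l.1 * (Qm A l.1 u.1 * Em A J u w * Qm A w.1 k.1)
        = ∑ u : {v // ¬ v ∈ J}, ∑ l : {v // v ∈ J}, ∑ w : {v // ¬ v ∈ J},
          C j.1 l.1 * (Qm A l.1 u.1 * Em A J u w * Qm A w.1 k.1) := Finset.sum_comm
      _ = ∑ u : {v // ¬ v ∈ J}, ∑ w : {v // ¬ v ∈ J}, ∑ l : {v // v ∈ J},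
          C j.1 l.1 * (Qm A l.1 u.1 * Em A J u w * Qm A w.1 k.1) :=
          Finset.sum_congr rfl fun u _ => Finset.sum_comm
      _ = ∑ w : {v // ¬ v ∈ J}, ∑ u : {v // ¬ v ∈ J}, ∑ l : {v // v ∈ J},
          C j.1 l.1 * (Qm A l.1 u.1 * Em A J u w * Qm A w.1 k.1) := Finset.sum_comm
      _ = ∑ w : {v // ¬ v ∈ J},
          (∑ u : {v // ¬ v ∈ J},
            (∑ l : {v // v ∈ J}, C j.1 l.1 * Qm A l.1 u.1) * Em A J u w) * Qm A w.1 k.1 := by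
          refine Finset.sum_congr rfl fun w _ => ?_
          rw [Finset.sum_mul]
          refine Finset.sum_congr rfl fun u _ => ?_
          rw [Finset.sum_mul, Finset.sum_mul]
          exact Finset.sum_congr rfl fun l _ => by ring
      _ = ∑ w : {v // ¬ v ∈ J}, (- C j.1 w.1) * Qm A w.1 k.1 :=
          Finset.sum_congr rfl fun w _ => by rw [F3 w]
      _ = - ∑ w : {v // ¬ v ∈ J}, C j.1 w.1 * Qm A w.1 k.1 := by
          rw [← Finset.sum_neg_distrib]
          exact Finset.sum_congr rfl fun w _ => (neg_mul _ _)
  have hjk : (∑ l : {v // v ∈ J}, C j.1 l.1 * Qm A l.1 k.1)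
      = (if j.1 = k.1 then 1 else 0) - ∑ u : {v // ¬ v ∈ J}, C j.1 u.1 * Qm A u.1 k.1 := by
    have := F1 k.1
    linarith
  rw [expand, triple, hjk]
  have : (if j.1 = k.1 then (1:ℚ) else 0) = if j = k then 1 else 0 := by
    by_cases h : j = k
    · rw [if_pos h, if_pos (congrArg Subtype.val h)]
    · rw [if_neg h, if_neg (fun h' => h (Subtype.ext h'))]
  rw [← this]
  ring


theorem cross_zero (G : SimpleGraph V) (hT : G.IsTree)
    (hnonadj : ∀ v w, v ≠ w → ¬G.Adj v w → A v w = 0)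
    (hJconn : (G.induce (J : Set V)).Connected)
    (hD : Good (Dm A J))
    (j k : {v // v ∈ J}) (hjk : j ≠ k) :
    ∑ u : {v // ¬ v ∈ J}, ∑ w : {v // ¬ v ∈ J},
      Qm A j.1 u.1 * Em A J u w * Qm A w.1 k.1 = 0 := by
  have hjk' : j.1 ≠ k.1 := fun h => hjk (Subtype.ext h)
  -- basic: nonzero entries of Qm give adjacency
  have hQadj : ∀ a b : V, a ≠ b → Qm A a b ≠ 0 → G.Adj a b := by
    intro a b hab h
    by_contra hn
    exact h (by simp [Qm, Matrix.map_apply, hnonadj a b hab hn])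
  -- the graph on the complement
  set GK : SimpleGraph {v // ¬ v ∈ J} := SimpleGraph.comap Subtype.val G with hGK
  set Sset : Set {v // ¬ v ∈ J} :=
    {u | ∃ v : {v // ¬ v ∈ J}, GK.Reachable u v ∧ G.Adj v.1 k.1} with hSset
  -- c3 : members of Sset are not adjacent to j
  have c3 : ∀ u : {v // ¬ v ∈ J}, u ∈ Sset → ¬ G.Adj j.1 u.1 := by
    rintro u ⟨v, hreach, hvk⟩ hadj_ju
    have hbridge := (SimpleGraph.isAcyclic_iff_forall_adj_isBridge.mp hT.IsAcyclic) hadj_ju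
    rw [SimpleGraph.isBridge_iff] at hbridge
    have hnreach := hbridge
    apply hnreach
    set H := G \ SimpleGraph.fromEdgeSet {s(j.1, u.1)} with hH
    have hHadj : ∀ a b : V, G.Adj a b → s(a, b) ≠ s(j.1, u.1) → H.Adj a b := by
      intro a b hab hne
      rw [hH, SimpleGraph.sdiff_adj]
      refine ⟨hab, ?_⟩
      rw [SimpleGraph.fromEdgeSet_adj]
      rintro ⟨he, -⟩
      exact hne he
    have Hom1 : ∀ a b : (J : Set V), (G.induce (J : Set V)).Adj a b → H.Adj a.1 b.1 := by
      intro a b hab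
      refine hHadj a.1 b.1 hab ?_
      intro he
      rw [Sym2.eq_iff] at he
      rcases he with ⟨-, hb⟩ | ⟨ha, -⟩
      · exact u.2 (hb ▸ Finset.mem_coe.mp b.2)
      · exact u.2 (ha ▸ Finset.mem_coe.mp a.2)
    have Hom2 : ∀ a b : {v // ¬ v ∈ J}, GK.Adj a b → H.Adj a.1 b.1 := by
      intro a b hab
      refine hHadj a.1 b.1 hab ?_
      intro he
      rw [Sym2.eq_iff] at he
      rcases he with ⟨ha, -⟩ | ⟨-, hb⟩
      · exact a.2 (ha ▸ j.2)
      · exact b.2 (hb ▸ j.2)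
    have r1 : H.Reachable j.1 k.1 := by
      have := hJconn.preconnected ⟨j.1, Finset.mem_coe.mpr j.2⟩ ⟨k.1, Finset.mem_coe.mpr k.2⟩
      exact this.map ⟨Subtype.val, fun {a b} hab => Hom1 a b hab⟩
    have r2 : H.Adj k.1 v.1 := by
      refine hHadj k.1 v.1 hvk.symm ?_
      intro he
      rw [Sym2.eq_iff] at he
      rcases he with ⟨hk, -⟩ | ⟨-, hk⟩
      · exact hjk' hk.symm
      · exact v.2 (hk ▸ j.2)
    have r3 : H.Reachable v.1 u.1 := (hreach.symm).map ⟨Subtype.val, fun {a b} hab => Hom2 a b hab⟩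
    exact (r1.trans (r2.reachable.trans r3)).symm.symm
  -- c1 : vertices outside Sset have zero Qm-entry against k
  have c1 : ∀ u : {v // ¬ v ∈ J}, u ∉ Sset → Qm A u.1 k.1 = 0 := by
    intro u hu
    by_contra h
    have hne : u.1 ≠ k.1 := fun hh => u.2 (hh ▸ k.2)
    exact hu ⟨u, SimpleGraph.Reachable.refl u, hQadj u.1 k.1 hne h⟩
  -- c2 : nonzero entries of Dm preserve membership in Sset
  have c2 : ∀ u w : {v // ¬ v ∈ J}, Dm A J u w ≠ 0 → (u ∈ Sset ↔ w ∈ Sset) := by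
    intro u w hD0
    rcases eq_or_ne u w with rfl | huw
    · exact Iff.rfl
    have hne : u.1 ≠ w.1 := fun hh => huw (Subtype.ext hh)
    have hadj : G.Adj u.1 w.1 := hQadj u.1 w.1 hne hD0
    have hadjK : GK.Adj u w := by rw [hGK]; exact hadj
    constructor
    · rintro ⟨v, hr, hv⟩
      exact ⟨v, (hadjK.symm.reachable).trans hr, hv⟩
    · rintro ⟨v, hr, hv⟩
      exact ⟨v, (hadjK.reachable).trans hr, hv⟩
  -- the linear algebra: z vanishes outside Sset
  have hDE : Dm A J * Em A J = 1 := Matrix.mul_nonsing_inv _ hD.isUnit_det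
  have hED : Em A J * Dm A J = 1 := Matrix.nonsing_inv_mul _ hD.isUnit_det
  set y : {v // ¬ v ∈ J} → ℚ := fun w => Qm A w.1 k.1 with hy
  set z : {v // ¬ v ∈ J} → ℚ := (Em A J) *ᵥ y with hz
  have hDz : (Dm A J) *ᵥ z = y := by
    rw [hz, Matrix.mulVec_mulVec, hDE, Matrix.one_mulVec]
  set z' : {v // ¬ v ∈ J} → ℚ := fun u => if u ∈ Sset then z u else 0 with hz'
  have hDz' : (Dm A J) *ᵥ z' = y := by
    funext u
    by_cases hu : u ∈ Sset
    · have : ((Dm A J) *ᵥ z') u = ((Dm A J) *ᵥ z) u := by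
        show ∑ w, Dm A J u w * z' w = ∑ w, Dm A J u w * z w
        refine Finset.sum_congr rfl fun w _ => ?_
        by_cases hw : w ∈ Sset
        · rw [hz']; simp [hw]
        · rcases eq_or_ne (Dm A J u w) 0 with h0 | h0
          · rw [h0, zero_mul, zero_mul]
          · exact absurd ((c2 u w h0).mp hu) hw
      rw [this, hDz]
    · have h0 : ((Dm A J) *ᵥ z') u = 0 := by
        show ∑ w, Dm A J u w * z' w = 0
        refine Finset.sum_eq_zero fun w _ => ?_
        by_cases hw : w ∈ Sset
        · rcases eq_or_ne (Dm A J u w) 0 with h0 | h0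
          · rw [h0, zero_mul]
          · exact absurd ((c2 u w h0).mpr hw) hu
        · rw [hz']; simp [hw]
      rw [h0, hy]
      exact (c1 u hu).symm
  have hzz' : z' = z := by
    have h1 : (Em A J) *ᵥ ((Dm A J) *ᵥ z') = (Em A J) *ᵥ ((Dm A J) *ᵥ z) := by
      rw [hDz', hDz]
    rwa [Matrix.mulVec_mulVec, Matrix.mulVec_mulVec, hED, Matrix.one_mulVec,
      Matrix.one_mulVec] at h1
  have hzout : ∀ u : {v // ¬ v ∈ J}, u ∉ Sset → z u = 0 := by
    intro u hu
    rw [← hzz', hz']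
    simp [hu]
  -- final computation
  have hrow : ∀ u : {v // ¬ v ∈ J},
      ∑ w : {v // ¬ v ∈ J}, Qm A j.1 u.1 * Em A J u w * Qm A w.1 k.1
        = Qm A j.1 u.1 * z u := by
    intro u
    rw [hz]
    show _ = Qm A j.1 u.1 * ∑ w, Em A J u w * y w
    rw [Finset.mul_sum]
    exact Finset.sum_congr rfl fun w _ => by rw [hy, mul_assoc]
  rw [Finset.sum_congr rfl fun u _ => hrow u]
  refine Finset.sum_eq_zero fun u _ => ?_
  by_cases hu : u ∈ Sset
  · have hne : j.1 ≠ u.1 := fun hh => u.2 (hh ▸ j.2)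
    have : Qm A j.1 u.1 = 0 := by
      by_contra h
      exact c3 u hu (hQadj j.1 u.1 hne h)
    rw [this, zero_mul]
  · rw [hzout u hu, mul_zero]



end Stmt11Aux

open Stmt11Aux

/-- For a finite tree `T` with plumbing matrix `A` and dual vectors `E*_v`
(the rows of `A⁻¹`), and any nonempty `J ⊆ V` inducing a subtree `T_J`, there
is a positive definite symmetric rational matrix `Ã_J` with the sparsity
pattern of `T_J` (vanishing off-diagonal entries away from edges of `T_J`)
such that `[π_J(E*_j)]_{j∈J} · Ã_J = [E_j]_{j∈J}`, where `π_J` is the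
coordinate projection onto `R⟨E_j⟩_{j∈J}` along `R⟨E_v⟩_{v∉J}`. -/
theorem stmt11 {V : Type*} [Fintype V] [DecidableEq V]
    (G : SimpleGraph V) (hT : G.IsTree)
    (A : Matrix V V ℤ)
    (hPD : (A.map ((↑) : ℤ → ℚ)).PosDef)
    (hadj : ∀ v w, G.Adj v w → A v w = -1)
    (hnonadj : ∀ v w, v ≠ w → ¬G.Adj v w → A v w = 0)
    (J : Finset V) (hJne : J.Nonempty)
    (hJconn : (G.induce (J : Set V)).Connected) :
    ∃ Atil : Matrix {v // v ∈ J} {v // v ∈ J} ℚ,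
      Atil.IsSymm ∧
      (∀ x : {v // v ∈ J} → ℚ, x ≠ 0 → 0 < dotProduct x (Atil.mulVec x)) ∧
      (∀ j k : {v // v ∈ J}, j ≠ k → ¬G.Adj j.1 k.1 → Atil j k = 0) ∧
      (∀ j k : {v // v ∈ J},
        ∑ l : {v // v ∈ J}, (A.map ((↑) : ℤ → ℚ))⁻¹ j.1 l.1 * Atil l k
          = if j = k then 1 else 0) := by
  have hGoodQ : Good (Qm A) := by
    constructor
    · show (Qm A)ᵀ = Qm A
      rw [← Matrix.conjTranspose_eq_transpose_of_trivial]
      exact hPD.1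
    · intro x hx
      simpa [Qm] using hPD.dotProduct_mulVec_pos hx
  have hGoodD : Good (Dm A J) := hGoodQ.submatrix Subtype.val Subtype.val_injective
  have hGoodC : Good ((Qm A)⁻¹) := hGoodQ.inv
  have hGoodP : Good (((Qm A)⁻¹).submatrix
      (Subtype.val : {v // v ∈ J} → V) Subtype.val) := hGoodC.submatrix Subtype.val Subtype.val_injective
  have hPS : (((Qm A)⁻¹).submatrix (Subtype.val : {v // v ∈ J} → V) Subtype.val)
      * Smat A J = 1 := by
    ext j k
    rw [Matrix.mul_apply, Matrix.one_apply]
    exact key_mul A J hGoodQ hGoodD j k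
  have hS : Smat A J = (((Qm A)⁻¹).submatrix
      (Subtype.val : {v // v ∈ J} → V) Subtype.val)⁻¹ := (Matrix.inv_eq_right_inv hPS).symm
  have hGoodS : Good (Smat A J) := by
    rw [hS]; exact hGoodP.inv
  refine ⟨Smat A J, hGoodS.1, hGoodS.2, ?_, ?_⟩
  · intro j k hjk hnadj
    show Qm A j.1 k.1 - _ = 0
    rw [cross_zero A J G hT hnonadj hJconn hGoodD j k hjk]
    have hne : j.1 ≠ k.1 := fun h => hjk (Subtype.ext h)
    have : Qm A j.1 k.1 = 0 := by
      simp [Qm, Matrix.map_apply, hnonadj j.1 k.1 hne hnadj]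
    rw [this, sub_zero]
  · exact key_mul A J hGoodQ hGoodD
end

section
/- Let S(t) = ∑_{l≥0} c_l t^l be the Taylor expansion at 0 of a rational function P(t) + D(t)/∏_{i=1}^m (1 − t^{a_i}) where P, D are polynomials with integer coefficients, a_i > 0, and deg D < ∑_i a_i (so the second summand has negative degree as a rational function). If additionally every exponent appearing in D lies in ∑_i [0,1)·a_i ∩ Z = {0, 1, …, ∑ a_i − 1} and more precisely in the half-open box, then the periodic constant of the expansion of D(t)/∏(1 − t^{a_i}) is zero; consequently pc(S) = P(1). -/
open Finset Polynomial PowerSeries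

noncomputable def geomB (B : ℕ) : PowerSeries ℤ := PowerSeries.mk fun j => if B ∣ j then 1 else 0

lemma one_sub_mul_geomB {B : ℕ} (hB : 0 < B) :
    ((1 : PowerSeries ℤ) - PowerSeries.X ^ B) * geomB B = 1 := by
  ext n
  rw [sub_mul, one_mul, map_sub, mul_comm, PowerSeries.coeff_mul_X_pow']
  simp only [geomB, PowerSeries.coeff_mk, PowerSeries.coeff_one]
  rcases Nat.eq_zero_or_pos n with rfl | hn
  · simp [hB.ne']
  · by_cases hBn : B ≤ n
    · have : (B ∣ n) ↔ (B ∣ n - B) := by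
        constructor
        · intro h; exact (Nat.dvd_sub h dvd_rfl)
        · intro h; have := Nat.sub_add_cancel hBn; rw [← this]; exact dvd_add h dvd_rfl
      simp [hBn, ← this, hn.ne']
    · have : ¬ B ∣ n := fun h => hBn (Nat.le_of_dvd hn h)
      simp [hBn, this, hn.ne']

lemma sum_ite_dvd {B : ℕ} (hB : 0 < B) (f : ℕ → ℤ) (j : ℕ) :
    ∑ u ∈ range (j+1), (if B ∣ u then f (u / B) else 0) = ∑ x ∈ range (j / B + 1), f x := by
  induction j with
  | zero => simp [Nat.zero_div]
  | succ j ih =>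
    rw [Finset.sum_range_succ, ih]
    by_cases h : B ∣ (j+1)
    · have : (j+1)/B = j/B + 1 := by rw [Nat.succ_div, if_pos h]
      rw [if_pos h, this, Finset.sum_range_succ _ (j/B+1)]
    · have : (j+1)/B = j/B := by rw [Nat.succ_div, if_neg h]; ring
      rw [if_neg h, this, add_zero]

lemma hockey (m : ℕ) (y : ℕ) :
    ∑ x ∈ range (y+1), ((x+m).choose m) = (y+m+1).choose (m+1) := by
  induction y with
  | zero => simp
  | succ y ih =>
    rw [Finset.sum_range_succ, ih]
    have : (y+1+m+1) = (y+m+1) + 1 := by ring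
    rw [this, Nat.choose_succ_succ (y+m+1) m]
    have : y+1+m = y+m+1 := by ring
    rw [this]; ring

open Finset Polynomial PowerSeries

lemma coeff_geomB_pow {B : ℕ} (hB : 0 < B) (m : ℕ) (j : ℕ) :
    PowerSeries.coeff (R := ℤ) j ((geomB B)^(m+1)) =
      if B ∣ j then (((j / B + m).choose m : ℕ) : ℤ) else 0 := by
  induction m generalizing j with
  | zero => simp [geomB, PowerSeries.coeff_mk]
  | succ m ih =>
    rw [pow_succ, PowerSeries.coeff_mul, Finset.Nat.sum_antidiagonal_eq_sum_range_succ_mk]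
    have hterm : ∀ k ∈ range (j+1),
        (PowerSeries.coeff (R := ℤ) k ((geomB B)^(m+1))) * (PowerSeries.coeff (R := ℤ) (j-k) (geomB B))
        = (if B ∣ k then (((k / B + m).choose m : ℕ) : ℤ) else 0) *
          (if B ∣ (j-k) then 1 else 0) := by
      intro k _
      rw [ih]
      simp [geomB, PowerSeries.coeff_mk]
    rw [Finset.sum_congr rfl hterm]
    by_cases hj : B ∣ j
    · rw [if_pos hj]
      have h2 : ∀ k ∈ range (j+1),
          (if B ∣ k then (((k / B + m).choose m : ℕ) : ℤ) else 0) *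
            (if B ∣ (j-k) then 1 else 0)
          = (if B ∣ k then (((k / B + m).choose m : ℕ) : ℤ) else 0) := by
        intro k hk
        by_cases hBk : B ∣ k
        · rw [if_pos (Nat.dvd_sub hj hBk), mul_one]
        · simp [hBk]
      rw [Finset.sum_congr rfl h2, sum_ite_dvd hB (fun x => (((x + m).choose m : ℕ) : ℤ)) j]
      have := hockey m (j / B)
      have hcast : ∑ x ∈ range (j/B + 1), (((x + m).choose m : ℕ) : ℤ)
          = (((j/B + m + 1).choose (m+1) : ℕ) : ℤ) := by
        rw [← this]; push_cast; rfl
      rw [hcast]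
      norm_num [Nat.add_assoc]
    · rw [if_neg hj]
      apply Finset.sum_eq_zero
      intro k hk
      by_cases hBk : B ∣ k
      · have : ¬ B ∣ (j - k) := by
          intro h
          apply hj
          have hk' : k ≤ j := Nat.lt_succ_iff.mp (Finset.mem_range.mp hk)
          have := Nat.sub_add_cancel hk'
          rw [← this]; exact dvd_add h hBk
        rw [if_neg this, mul_zero]
      · simp [hBk]

lemma sum_coeff_geomB_pow {B : ℕ} (hB : 0 < B) (m N : ℕ) :
    ∑ l ∈ range N, PowerSeries.coeff (R := ℤ) l ((geomB B)^(m+1)) =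
      if N = 0 then 0 else ((((N-1) / B + m + 1).choose (m+1) : ℕ) : ℤ) := by
  cases N with
  | zero => simp
  | succ n =>
    rw [if_neg (Nat.succ_ne_zero n)]
    have h1 : ∀ l ∈ range (n+1), PowerSeries.coeff (R := ℤ) l ((geomB B)^(m+1))
        = (if B ∣ l then (((l / B + m).choose m : ℕ) : ℤ) else 0) := fun l _ => coeff_geomB_pow hB m l
    rw [Finset.sum_congr rfl h1, sum_ite_dvd hB (fun x => (((x + m).choose m : ℕ) : ℤ)) n]
    have := hockey m (n / B)
    have hcast : ∑ x ∈ range (n/B + 1), (((x + m).choose m : ℕ) : ℤ)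
        = (((n/B + m + 1).choose (m+1) : ℕ) : ℤ) := by
      rw [← this]; push_cast; rfl
    rw [hcast]
    simp

open Finset Polynomial PowerSeries

lemma sum_coeff_polymul (E : Polynomial ℤ) (H : PowerSeries ℤ) (N : ℕ) :
    ∑ l ∈ range N, PowerSeries.coeff (R := ℤ) l ((E : PowerSeries ℤ) * H) =
      ∑ k ∈ E.support, E.coeff k * ∑ j ∈ range (N - k), PowerSeries.coeff (R := ℤ) j H := by
  induction N with
  | zero => simp
  | succ N ih =>
    rw [Finset.sum_range_succ, ih]
    have key : ∀ k ∈ E.support,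
        E.coeff k * ∑ j ∈ range (N + 1 - k), PowerSeries.coeff (R := ℤ) j H
        = E.coeff k * ∑ j ∈ range (N - k), PowerSeries.coeff (R := ℤ) j H
          + (if k ≤ N then E.coeff k * PowerSeries.coeff (R := ℤ) (N - k) H else 0) := by
      intro k _
      by_cases hk : k ≤ N
      · rw [if_pos hk]
        have : N + 1 - k = (N - k) + 1 := by omega
        rw [this, Finset.sum_range_succ, mul_add]
      · rw [if_neg hk]
        have : N + 1 - k = N - k := by omega
        rw [this, add_zero]
    rw [Finset.sum_congr rfl key, Finset.sum_add_distrib]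
    congr 1
    -- ⊢ coeff N (E * H) = ∑ k in E.support, ite (k ≤ N) (E.coeff k * coeff (N-k) H) 0
    rw [PowerSeries.coeff_mul, Finset.Nat.sum_antidiagonal_eq_sum_range_succ_mk]
    simp only [Polynomial.coeff_coe]
    rw [← Finset.sum_filter]
    refine (Finset.sum_subset ?_ ?_).symm
    · intro k hk
      exact Finset.mem_range.mpr (Nat.lt_succ_of_le (Finset.mem_filter.mp hk).2)
    · intro k hk hnk
      by_cases hks : k ∈ E.support
      · exfalso
        exact hnk (Finset.mem_filter.mpr ⟨hks, Nat.lt_succ_iff.mp (Finset.mem_range.mp hk)⟩)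
      · rw [Polynomial.notMem_support_iff.mp hks, zero_mul]

lemma prod_succ_eq (m : ℕ) (n : ℕ) :
    ∏ i ∈ range m, (n + 1 + i) = (n + m).choose m * m.factorial := by
  induction m with
  | zero => simp
  | succ m ih =>
    rw [Finset.prod_range_succ, ih]
    have h := Nat.add_one_mul_choose_eq (n + m) m
    have : (n + m).choose m * m.factorial * (n + 1 + m)
        = ((n + m + 1) * (n + m).choose m) * m.factorial := by ring
    rw [this, h, Nat.factorial_succ]
    ring

lemma sum_coeff_eq_eval_one (P : Polynomial ℤ) {N : ℕ} (h : P.natDegree < N) :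
    ∑ l ∈ range N, P.coeff l = P.eval 1 := by
  rw [Polynomial.eval_eq_sum_range' h]
  simp

lemma poly_eq_of_eval_eventually (F G : Polynomial ℚ) (n0 : ℕ)
    (h : ∀ n : ℕ, n0 ≤ n → F.eval (n : ℚ) = G.eval (n : ℚ)) : F = G := by
  apply Polynomial.eq_of_infinite_eval_eq
  apply Set.Infinite.mono (s := (fun n : ℕ => (n : ℚ)) '' (Set.Ici n0))
  · rintro x ⟨n, hn, rfl⟩
    exact h n hn
  · exact Set.Infinite.image (Set.injOn_of_injective Nat.cast_injective) (Set.Ici_infinite n0)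

/-- If `S(t)` is the Taylor expansion of `P(t) + D(t)/∏_{i}(1 − t^{a_i})` with
`P, D` integer polynomials, `a_i > 0`, and all exponents of `D` lying in the
half-open box `{0, 1, …, ∑ a_i − 1}`, then the periodic constant of `S` equals
`P(1)`: any polynomial `F` representing a counting function
`n ↦ ∑_{l < pn} c_l` of `S` has constant term `F(0) = P(1)`. -/
theorem stmt15 (m : ℕ) (a : Fin m → ℕ) (ha : ∀ i, 0 < a i)
    (P D : Polynomial ℤ)
    (hD : ∀ k ∈ D.support, k < ∑ i, a i)
    (S : PowerSeries ℤ)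
    (hS : S * ∏ i, (1 - PowerSeries.X ^ a i)
        = (P : PowerSeries ℤ) * ∏ i, (1 - PowerSeries.X ^ a i)
          + (D : PowerSeries ℤ))
    (p : ℕ) (hp : 0 < p) (F : Polynomial ℚ)
    (hF : ∀ n : ℕ, 0 < n →
      F.eval (n : ℚ) = ∑ l ∈ Finset.range (p * n), ((PowerSeries.coeff (R := ℤ) l) S : ℚ)) :
    F.eval 0 = ((P.eval 1 : ℤ) : ℚ) := by
  classical
  cases m with
  | zero =>
    have hD0 : D = 0 := by
      apply Polynomial.support_eq_empty.mp
      apply Finset.eq_empty_of_forall_notMem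
      intro k hk
      have := hD k hk
      simp at this
    have hSP : S = (P : PowerSeries ℤ) := by
      have h1 : (∏ i : Fin 0, ((1:PowerSeries ℤ) - PowerSeries.X ^ a i)) = 1 := by simp
      rw [h1, mul_one, mul_one, hD0] at hS
      simpa using hS
    have hFeq : F = Polynomial.C ((P.eval 1 : ℤ) : ℚ) := by
      apply poly_eq_of_eval_eventually _ _ (P.natDegree + 1)
      intro n hn
      have hn0 : 0 < n := by omega
      have hdeg : P.natDegree < p * n := by
        have := Nat.le_mul_of_pos_left n hp
        omega
      rw [hF n hn0, Polynomial.eval_C, hSP]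
      rw [← sum_coeff_eq_eval_one P hdeg]
      push_cast [Polynomial.coeff_coe]
      rfl
    rw [hFeq, Polynomial.eval_C]
  | succ m0 =>
    set B := ∏ i, a i with hBdef
    have hB : 0 < B := Finset.prod_pos (fun i _ => ha i)
    have hdvd : ∀ i, a i ∣ B := fun i => Finset.dvd_prod_of_mem a (Finset.mem_univ i)
    have haB : ∀ i, a i ≤ B := fun i => Nat.le_of_dvd hB (hdvd i)
    set w : Fin (m0+1) → Polynomial ℤ :=
      fun i => ∑ j ∈ Finset.range (B / a i), Polynomial.X ^ (a i * j) with hw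
    have key1 : ∀ i, ((1 : Polynomial ℤ) - Polynomial.X ^ (a i)) * w i
        = 1 - Polynomial.X ^ B := by
      intro i
      have hg := geom_sum_mul (Polynomial.X ^ (a i) : Polynomial ℤ) (B / a i)
      rw [← pow_mul, Nat.mul_div_cancel' (hdvd i)] at hg
      have hw' : w i = ∑ j ∈ Finset.range (B / a i), (Polynomial.X ^ (a i) : Polynomial ℤ) ^ j := by
        simp [hw, pow_mul]
      rw [hw']
      linear_combination -hg
    have key1PS : ∀ i, ((1 : PowerSeries ℤ) - PowerSeries.X ^ (a i)) * ((w i : Polynomial ℤ) : PowerSeries ℤ)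
        = 1 - PowerSeries.X ^ B := by
      intro i
      have h := congrArg (fun q : Polynomial ℤ => (q : PowerSeries ℤ)) (key1 i)
      simp only [Polynomial.coe_mul, Polynomial.coe_sub, Polynomial.coe_one,
        Polynomial.coe_pow, Polynomial.coe_X] at h
      exact h
    set E : Polynomial ℤ := D * ∏ i, w i with hE
    have hco : ((∏ i, w i : Polynomial ℤ) : PowerSeries ℤ) = ∏ i, ((w i : Polynomial ℤ) : PowerSeries ℤ) := by
      rw [← Polynomial.coeToPowerSeries.ringHom_apply, map_prod]
      simp [Polynomial.coeToPowerSeries.ringHom_apply]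
    have hmain : (S - (P : PowerSeries ℤ)) * ((1 - PowerSeries.X ^ B)^(m0+1)) = (E : PowerSeries ℤ) := by
      have h1 : (S - (P : PowerSeries ℤ)) * ∏ i, (1 - PowerSeries.X ^ a i) = (D : PowerSeries ℤ) := by
        rw [sub_mul, hS]; ring
      calc (S - (P : PowerSeries ℤ)) * ((1 - PowerSeries.X ^ B)^(m0+1))
          = (S - (P : PowerSeries ℤ)) * ∏ i, (((1:PowerSeries ℤ) - PowerSeries.X ^ a i) * ((w i : Polynomial ℤ) : PowerSeries ℤ)) := by
            rw [Finset.prod_congr rfl (fun i _ => key1PS i), Finset.prod_const,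
              Finset.card_univ, Fintype.card_fin]
        _ = ((S - (P : PowerSeries ℤ)) * ∏ i, (1 - PowerSeries.X ^ a i)) * ∏ i, ((w i : Polynomial ℤ) : PowerSeries ℤ) := by
            rw [Finset.prod_mul_distrib]; ring
        _ = (D : PowerSeries ℤ) * ∏ i, ((w i : Polynomial ℤ) : PowerSeries ℤ) := by rw [h1]
        _ = (E : PowerSeries ℤ) := by rw [hE, Polynomial.coe_mul, hco]
    have hU2 : S - (P : PowerSeries ℤ) = (E : PowerSeries ℤ) * (geomB B)^(m0+1) := by
      have hg := one_sub_mul_geomB hB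
      calc S - (P : PowerSeries ℤ)
          = (S - (P : PowerSeries ℤ)) * (((1 - PowerSeries.X ^ B) * geomB B)^(m0+1)) := by
            rw [hg, one_pow, mul_one]
        _ = ((S - (P : PowerSeries ℤ)) * (1 - PowerSeries.X ^ B)^(m0+1)) * (geomB B)^(m0+1) := by
            rw [mul_pow]; ring
        _ = (E : PowerSeries ℤ) * (geomB B)^(m0+1) := by rw [hmain]
    have hwdeg : ∀ i, (w i).natDegree ≤ B - a i := by
      intro i
      apply Polynomial.natDegree_sum_le_of_forall_le
      intro j hj
      rw [Polynomial.natDegree_X_pow]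
      have hj' : j + 1 ≤ B / a i := Finset.mem_range.mp hj
      have h1 : a i * (j+1) ≤ B := by
        calc a i * (j+1) ≤ a i * (B / a i) := Nat.mul_le_mul_left _ hj'
          _ = B := Nat.mul_div_cancel' (hdvd i)
      have h2 : a i * (j+1) = a i * j + a i := by ring
      omega
    have hDdeg : D.natDegree < ∑ i, a i := by
      by_cases hD0 : D = 0
      · rw [hD0, Polynomial.natDegree_zero]
        exact Finset.sum_pos (fun i _ => ha i) Finset.univ_nonempty
      · exact hD D.natDegree (Polynomial.natDegree_mem_support_of_nonzero hD0)
    have hEsupp : ∀ k ∈ E.support, k / B < m0 + 1 := by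
      intro k hk
      rw [Nat.div_lt_iff_lt_mul hB]
      have hk1 : k ≤ E.natDegree := Polynomial.le_natDegree_of_ne_zero (Polynomial.mem_support_iff.mp hk)
      have h2 : E.natDegree ≤ D.natDegree + (∏ i, w i).natDegree := by
        rw [hE]; exact Polynomial.natDegree_mul_le
      have h3 : (∏ i, w i).natDegree ≤ ∑ i, (B - a i) :=
        le_trans (Polynomial.natDegree_prod_le _ _) (Finset.sum_le_sum (fun i _ => hwdeg i))
      have h4 : ∑ i, (B - a i) + ∑ i, a i = (m0+1) * B := by
        rw [← Finset.sum_add_distrib]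
        rw [Finset.sum_congr rfl (fun i _ => Nat.sub_add_cancel (haB i))]
        rw [Finset.sum_const, Finset.card_univ, Fintype.card_fin, smul_eq_mul]
      omega
    -- the key cast computation
    have hkey : ∀ k ∈ E.support, ∀ s : ℕ,
        ((∑ j ∈ Finset.range (p * (B * s) - k), PowerSeries.coeff (R := ℤ) j ((geomB B)^(m0+1)) : ℤ) : ℚ)
        = (1 / (Nat.factorial (m0+1) : ℚ)) *
            ∏ i ∈ Finset.range (m0+1), ((p:ℚ) * (s:ℚ) + ((i:ℚ) - ((k/B : ℕ) : ℚ))) := by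
      intro k hk s
      have hq : k / B < m0 + 1 := hEsupp k hk
      rw [sum_coeff_geomB_pow hB]
      by_cases hcase : p * s ≤ k / B
      · have hNk : p * (B * s) ≤ k := by
          have h1 : B * (p * s) ≤ B * (k / B) := Nat.mul_le_mul_left B hcase
          have h2 : B * (k / B) ≤ k := by
            rw [Nat.mul_comm]; exact Nat.div_mul_le_self k B
          have h3 : p * (B * s) = B * (p * s) := by ring
          omega
        rw [if_pos (by omega : p * (B*s) - k = 0)]
        have hmem : k / B - p * s ∈ Finset.range (m0+1) := Finset.mem_range.mpr (by omega)
        rw [Finset.prod_eq_zero hmem]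
        · simp
        · have hc : ((k/B - p*s : ℕ) : ℚ) = ((k/B : ℕ):ℚ) - (p:ℚ)*(s:ℚ) := by
            push_cast [Nat.cast_sub hcase]
            ring
          rw [hc]
          ring
      · push_neg at hcase
        set d := p * s - k / B with hd
        have hd1 : 1 ≤ d := by omega
        have hmod := Nat.div_add_mod k B
        have hmlt : k % B < B := Nat.mod_lt _ hB
        have h5 : B * (k/B) + B * d = B * (p*s) := by
          rw [← Nat.mul_add]
          congr 1
          omega
        have h7 : p * (B*s) = B * (p*s) := by ring
        have hkN : k < p * (B * s) := by
          have h6 : B * 1 ≤ B * d := Nat.mul_le_mul_left B hd1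
          omega
        have hN0 : ¬ (p*(B*s) - k = 0) := by omega
        rw [if_neg hN0]
        have hdiv : (p*(B*s) - k - 1) / B = d - 1 := by
          apply Nat.div_eq_of_lt_le
          · have h8 : B * (d-1) + B = B * d := by
              rw [← Nat.mul_succ]
              congr 1
              omega
            have h9 : (d-1) * B = B * (d-1) := Nat.mul_comm _ _
            omega
          · have h8 : B * (d-1) + B = B * d := by
              rw [← Nat.mul_succ]
              congr 1
              omega
            have h9 : (d-1+1) * B = B * d := by
              rw [Nat.mul_comm]
              congr 1
              omega
            omega
        rw [hdiv]
        have hprod := prod_succ_eq (m0+1) (d-1)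
        have hd11 : d - 1 + 1 = d := by omega
        rw [hd11] at hprod
        have hRHS : ∀ i ∈ Finset.range (m0+1),
            (p:ℚ)*(s:ℚ) + ((i:ℚ) - ((k/B:ℕ):ℚ)) = ((d + i : ℕ) : ℚ) := by
          intro i _
          have hdc : ((d:ℕ):ℚ) = (p:ℚ)*(s:ℚ) - ((k/B:ℕ):ℚ) := by
            rw [hd]
            push_cast [Nat.cast_sub (le_of_lt hcase)]
            ring
          push_cast
          rw [hdc]
          ring
        rw [Finset.prod_congr rfl hRHS, ← Nat.cast_prod, hprod]
        have hfac : ((Nat.factorial (m0+1) : ℕ) : ℚ) ≠ 0 := by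
          exact_mod_cast Nat.factorial_ne_zero (m0+1)
        push_cast
        field_simp
        ring
    -- the polynomial Ψ
    set Ψ : Polynomial ℚ := Polynomial.C ((P.eval 1 : ℤ) : ℚ)
      + ∑ k ∈ E.support, Polynomial.C ((E.coeff k : ℚ) / (Nat.factorial (m0+1) : ℚ)) *
          ∏ i ∈ Finset.range (m0+1),
            (Polynomial.C (p:ℚ) * Polynomial.X + Polynomial.C ((i:ℚ) - ((k/B : ℕ) : ℚ))) with hPsi
    have hFcomp : F.comp (Polynomial.C (B:ℚ) * Polynomial.X) = Ψ := by
      apply poly_eq_of_eval_eventually _ _ (P.natDegree + 1)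
      intro s hs
      have hs1 : 1 ≤ s := by omega
      have hn0 : 0 < B * s := Nat.mul_pos hB (by omega)
      have hdegP : P.natDegree < p * (B * s) := by
        have h1 : s ≤ B * s := Nat.le_mul_of_pos_left s hB
        have h2 : B * s ≤ p * (B*s) := Nat.le_mul_of_pos_left _ hp
        omega
      rw [Polynomial.eval_comp, Polynomial.eval_mul, Polynomial.eval_C, Polynomial.eval_X]
      have hcast : (B:ℚ) * (s:ℚ) = ((B*s : ℕ) : ℚ) := by push_cast; ring
      rw [hcast, hF (B*s) hn0]
      have hsplit : ∀ l, PowerSeries.coeff (R := ℤ) l S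
          = P.coeff l + PowerSeries.coeff (R := ℤ) l ((E : PowerSeries ℤ) * (geomB B)^(m0+1)) := by
        intro l
        rw [← hU2, map_sub, Polynomial.coeff_coe]
        ring
      calc ∑ l ∈ Finset.range (p*(B*s)), ((PowerSeries.coeff (R := ℤ) l S : ℤ) : ℚ)
          = ∑ l ∈ Finset.range (p*(B*s)), (((P.coeff l : ℤ) : ℚ)
              + ((PowerSeries.coeff (R := ℤ) l ((E : PowerSeries ℤ) * (geomB B)^(m0+1)) : ℤ) : ℚ)) := by
            apply Finset.sum_congr rfl
            intro l _
            rw [hsplit l]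
            push_cast
            ring
        _ = ((P.eval 1 : ℤ) : ℚ)
            + ((∑ l ∈ Finset.range (p*(B*s)), PowerSeries.coeff (R := ℤ) l ((E : PowerSeries ℤ) * (geomB B)^(m0+1)) : ℤ) : ℚ) := by
            rw [Finset.sum_add_distrib]
            congr 1
            · rw [← sum_coeff_eq_eval_one P hdegP]
              push_cast
              rfl
            · push_cast
              rfl
        _ = ((P.eval 1 : ℤ) : ℚ)
            + ∑ k ∈ E.support, ((E.coeff k : ℚ)
                * ((∑ j ∈ Finset.range (p*(B*s) - k), PowerSeries.coeff (R := ℤ) j ((geomB B)^(m0+1)) : ℤ) : ℚ)) := by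
            rw [sum_coeff_polymul]
            push_cast
            rfl
        _ = Ψ.eval (s:ℚ) := by
            rw [hPsi, Polynomial.eval_add, Polynomial.eval_C, Polynomial.eval_finset_sum]
            congr 1
            apply Finset.sum_congr rfl
            intro k hk
            rw [hkey k hk s]
            rw [Polynomial.eval_mul, Polynomial.eval_C, Polynomial.eval_prod]
            have : ∀ i ∈ Finset.range (m0+1),
                Polynomial.eval (s:ℚ) (Polynomial.C (p:ℚ) * Polynomial.X + Polynomial.C ((i:ℚ) - ((k/B : ℕ) : ℚ)))
                = (p:ℚ)*(s:ℚ) + ((i:ℚ) - ((k/B:ℕ):ℚ)) := by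
              intro i _
              simp
            rw [Finset.prod_congr rfl this]
            ring
    have h0 := congrArg (Polynomial.eval (0:ℚ)) hFcomp
    rw [Polynomial.eval_comp, Polynomial.eval_mul, Polynomial.eval_C, Polynomial.eval_X,
      mul_zero] at h0
    rw [h0, hPsi, Polynomial.eval_add, Polynomial.eval_C, Polynomial.eval_finset_sum]
    have hzero : ∀ k ∈ E.support,
        Polynomial.eval (0:ℚ) (Polynomial.C ((E.coeff k : ℚ) / (Nat.factorial (m0+1) : ℚ)) *
          ∏ i ∈ Finset.range (m0+1),
            (Polynomial.C (p:ℚ) * Polynomial.X + Polynomial.C ((i:ℚ) - ((k/B : ℕ) : ℚ)))) = 0 := by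
      intro k hk
      have hq : k / B < m0 + 1 := hEsupp k hk
      rw [Polynomial.eval_mul, Polynomial.eval_prod]
      rw [Finset.prod_eq_zero (Finset.mem_range.mpr hq) (by simp)]
      ring
    rw [Finset.sum_congr rfl hzero, Finset.sum_const, smul_zero, add_zero]
end

section
/- Let T be a finite tree with plumbing matrix A, dual vectors E*_v, Lipman cone S' = Z_{≥0}⟨E*_v⟩, and L the sublattice spanned by {E_v}. Fix h ∈ H = L'/L and let s_h be the unique minimal element of {l' ∈ L' : [l'] = h} ∩ S' with respect to the partial order l₁ ≥ l₂ iff l₁ − l₂ ∈ Z_{≥0}⟨E_v⟩ restricted to this set. Let u be a leaf of T and π^{(u)} : L' → L'_{T∖u} the projection defined by π^{(u)}(E*_v) = E*_v (the dual in T∖u) for v ≠ u and π^{(u)}(E*_u) = 0. Then π^{(u)}(s_h) is the unique minimal element s_{h̄} of {l' ∈ L'_{T∖u} : [l'] = h̄} ∩ S'_{T∖u}, where h̄ = [π^{(u)}(s_h)]. -/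
open scoped Classical

variable {V : Type*} [Fintype V] [DecidableEq V]

/-- Membership in the Lipman cone `S' = Z_{≥0}⟨E*_v⟩`, where `E*_v` are the
given dual vectors (rows of the inverse plumbing matrix). -/
def memLipman {W : Type*} [Fintype W] (Estar : W → W → ℚ) (x : W → ℚ) : Prop :=
  ∃ n : W → ℕ, x = ∑ v, (n v : ℚ) • Estar v

/-- The plumbing matrix of `T ∖ u` (over `ℚ`): the principal submatrix of `A`
obtained by deleting row and column `u`. -/
def delMat (A : Matrix V V ℤ) (u : V) :
    Matrix {v : V // v ≠ u} {v : V // v ≠ u} ℚ :=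
  Matrix.of fun v w => ((A.map ((↑) : ℤ → ℚ)) v.1 w.1 : ℚ)

/-- The projection `π^{(u)} : L' → L'_{T∖u}` determined by
`π^{(u)}(E*_v) = E*_v` (the dual vector of `T∖u`) for `v ≠ u` and
`π^{(u)}(E*_u) = 0`: writing `x = A⁻¹ m`, it sends `x` to `(A')⁻¹ m'` where
`A'` is the plumbing matrix of `T∖u` and `m'` the restriction of `m = A x`. -/
noncomputable def projAway (A : Matrix V V ℤ) (u : V) (x : V → ℚ) :
    {v : V // v ≠ u} → ℚ :=
  (delMat A u)⁻¹.mulVec fun v => ((A.map ((↑) : ℤ → ℚ)).mulVec x) v.1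

namespace Stmt18Aux

variable {W : Type*} [Fintype W] [DecidableEq W]

lemma star_vec (x : W → ℚ) : star x = x := by
  funext v; simp

lemma posdef_isUnit_det {M : Matrix W W ℚ} (h : M.PosDef) : IsUnit M.det := by
  rw [isUnit_iff_ne_zero]
  intro hdet
  obtain ⟨v, hv, hmv⟩ := (Matrix.exists_mulVec_eq_zero_iff).2 hdet
  have := h.dotProduct_mulVec_pos hv
  rw [star_vec, hmv] at this
  simp at this

lemma sum_split (u : W) (f : W → ℚ) :
    ∑ v, f v = f u + ∑ v : {v : W // v ≠ u}, f v.1 := by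
  rw [← Finset.add_sum_erase (Finset.univ) f (Finset.mem_univ u)]
  congr 1
  exact Finset.sum_subtype _ (by simp) f

noncomputable def ext0 (u : W) (l : {v : W // v ≠ u} → ℚ) : W → ℚ :=
  fun v => if h : v = u then 0 else l ⟨v, h⟩

lemma ext0_apply (u : W) (l : {v : W // v ≠ u} → ℚ) (v : {v : W // v ≠ u}) :
    ext0 u l v.1 = l v := by
  simp [ext0, v.2]

lemma mulVec_ext0 (M : Matrix W W ℚ) (u : W) (l : {v : W // v ≠ u} → ℚ) (v : W) :
    M.mulVec (ext0 u l) v = ∑ w : {w : W // w ≠ u}, M v w.1 * l w := by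
  calc M.mulVec (ext0 u l) v = ∑ w ∈ Finset.univ.erase u, M v w * ext0 u l w := by
        rw [Finset.sum_erase _ (by simp [ext0])]
        rfl
    _ = ∑ w : {w : W // w ≠ u}, M v w.1 * ext0 u l w.1 :=
        Finset.sum_subtype _ (by simp) _
    _ = _ := by simp only [ext0_apply]

lemma memLipman_iff (M : Matrix W W ℚ) (hsymm : M.transpose = M) (hdet : IsUnit M.det)
    (x : W → ℚ) :
    memLipman (fun v w => M⁻¹ v w) x ↔
      ∃ n : W → ℕ, M.mulVec x = fun v => (n v : ℚ) := by
  have key : ∀ c : W → ℚ, (∑ v, c v • (fun w => M⁻¹ v w)) = Matrix.vecMul c M⁻¹ := by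
    intro c
    funext w
    simp [Matrix.vecMul, dotProduct, Finset.sum_apply]
  have hmv : ∀ t : W → ℚ, M.mulVec t = Matrix.vecMul t M := by
    intro t
    conv_lhs => rw [← hsymm]
    exact Matrix.mulVec_transpose M t
  constructor
  · rintro ⟨n, rfl⟩
    refine ⟨n, ?_⟩
    rw [key, hmv, Matrix.vecMul_vecMul, Matrix.nonsing_inv_mul M hdet, Matrix.vecMul_one]
  · rintro ⟨n, hn⟩
    refine ⟨n, ?_⟩
    rw [key, ← hn, hmv, Matrix.vecMul_vecMul, Matrix.mul_nonsing_inv M hdet,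
      Matrix.vecMul_one]

end Stmt18Aux

open Stmt18Aux

/-- Deleting a leaf `u` of the tree `T`, the minimal representative `s_h` of a
class `h` in the Lipman cone projects under `π^{(u)}` onto the minimal
representative `s_{h̄}` of the class `h̄ = [π^{(u)}(s_h)]` for `T∖u`:
`π^{(u)}(s_h)` lies in `S'_{T∖u}`, is dominated by every element of
`S'_{T∖u}` in its class, and is the unique such element. -/
theorem stmt18 (G : SimpleGraph V) (hT : G.IsTree)
    (A : Matrix V V ℤ)
    (hPD : (A.map ((↑) : ℤ → ℚ)).PosDef)
    (hadjA : ∀ v w, G.Adj v w → A v w = -1)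
    (hnonadj : ∀ v w, v ≠ w → ¬G.Adj v w → A v w = 0)
    (u w0 : V) (hadj : G.Adj u w0) (hleaf : ∀ w, G.Adj u w → w = w0)
    (s : V → ℚ)
    (hsS : memLipman (fun v w => (A.map ((↑) : ℤ → ℚ))⁻¹ v w) s)
    (hmin : ∀ y : V → ℚ,
      memLipman (fun v w => (A.map ((↑) : ℤ → ℚ))⁻¹ v w) y →
      (∀ v, ∃ m : ℤ, y v - s v = (m : ℚ)) → ∀ v, s v ≤ y v) :
    memLipman (fun v w => (delMat A u)⁻¹ v w) (projAway A u s)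
    ∧ (∀ y : {v : V // v ≠ u} → ℚ,
        memLipman (fun v w => (delMat A u)⁻¹ v w) y →
        (∀ v, ∃ m : ℤ, y v - projAway A u s v = (m : ℚ)) →
        ∀ v, projAway A u s v ≤ y v)
    ∧ (∀ z : {v : V // v ≠ u} → ℚ,
        memLipman (fun v w => (delMat A u)⁻¹ v w) z →
        (∀ v, ∃ m : ℤ, z v - projAway A u s v = (m : ℚ)) →
        (∀ y : {v : V // v ≠ u} → ℚ,
          memLipman (fun v w => (delMat A u)⁻¹ v w) y →
          (∀ v, ∃ m : ℤ, y v - z v = (m : ℚ)) → ∀ v, z v ≤ y v) →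
        z = projAway A u s) := by
  classical
  set B : Matrix V V ℚ := A.map ((↑) : ℤ → ℚ) with hBdef
  set B' : Matrix {v : V // v ≠ u} {v : V // v ≠ u} ℚ := delMat A u with hB'def
  set πs : {v : V // v ≠ u} → ℚ := projAway A u s with hπdef
  -- symmetry of B
  have hsymm : ∀ i j : V, B j i = B i j := by
    intro i j
    have h := congrFun (congrFun hPD.1 i) j
    simpa [Matrix.conjTranspose_apply] using h
  have hBT : B.transpose = B := by
    funext i j
    simpa [Matrix.transpose_apply] using hsymm i j
  have hdetB : IsUnit B.det := posdef_isUnit_det hPD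
  -- entries of B' (definitional)
  have hB'app : ∀ (v w : {v : V // v ≠ u}), B' v w = B v.1 w.1 := fun v w => rfl
  -- positive definiteness of B'
  have hPD' : B'.PosDef := by
    refine Matrix.PosDef.of_dotProduct_mulVec_pos ?_ ?_
    · funext i j
      show star (B' j i) = B' i j
      rw [star_trivial, hB'app, hB'app]
      exact hsymm i.1 j.1
    · intro x hx
      have hxt : ext0 u x ≠ 0 := by
        intro h0
        apply hx
        funext v
        have h1 := congrFun h0 v.1
        rw [ext0_apply] at h1
        exact h1
      have hpos := hPD.dotProduct_mulVec_pos hxt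
      rw [star_vec] at hpos
      rw [star_vec]
      have hkey : ∀ v : {v : V // v ≠ u}, B'.mulVec x v = B.mulVec (ext0 u x) v.1 := by
        intro v
        exact (mulVec_ext0 B u x v.1).symm
      have heq : dotProduct (ext0 u x) (B.mulVec (ext0 u x))
          = dotProduct x (B'.mulVec x) := by
        calc dotProduct (ext0 u x) (B.mulVec (ext0 u x))
            = ∑ v, ext0 u x v * B.mulVec (ext0 u x) v := rfl
          _ = ext0 u x u * B.mulVec (ext0 u x) u
              + ∑ v : {v : V // v ≠ u}, ext0 u x v.1 * B.mulVec (ext0 u x) v.1 :=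
            sum_split u _
          _ = ∑ v : {v : V // v ≠ u}, x v * B'.mulVec x v := by
            rw [show ext0 u x u = 0 from by simp [ext0], zero_mul, zero_add]
            exact Finset.sum_congr rfl fun v _ => by rw [ext0_apply, hkey v]
          _ = dotProduct x (B'.mulVec x) := rfl
      rw [← heq]
      exact hpos
  have hB'T : B'.transpose = B' := by
    funext i j
    have h := congrFun (congrFun hPD'.1 i) j
    rw [Matrix.transpose_apply]
    simpa [Matrix.conjTranspose_apply] using h
  have hdetB' : IsUnit B'.det := posdef_isUnit_det hPD'
  -- the coefficients of s
  obtain ⟨ns, hns⟩ := (memLipman_iff B hBT hdetB s).1 hsS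
  -- projection identity
  have hproj : ∀ v : {v : V // v ≠ u}, B'.mulVec πs v = (ns v.1 : ℚ) := by
    have h1 : πs = B'⁻¹.mulVec (fun v => B.mulVec s v.1) := rfl
    intro v
    rw [h1, Matrix.mulVec_mulVec, Matrix.mul_nonsing_inv _ hdetB', Matrix.one_mulVec]
    exact congrFun hns v.1
  -- Part 1
  have hpart1 : memLipman (fun v w => B'⁻¹ v w) πs := by
    rw [memLipman_iff B' hB'T hdetB']
    exact ⟨fun v => ns v.1, funext fun v => hproj v⟩
  -- integer entries
  have hBint : ∀ v w : V, ∃ m : ℤ, B v w = (m : ℚ) := fun v w => ⟨A v w, rfl⟩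
  -- off-diagonal entries are nonpositive
  have hoff : ∀ (v w : {v : V // v ≠ u}), v ≠ w → B' v w ≤ 0 := by
    intro v w hvw
    rw [hB'app]
    have hne : v.1 ≠ w.1 := fun h => hvw (Subtype.ext h)
    show ((A v.1 w.1 : ℤ) : ℚ) ≤ 0
    by_cases hadj' : G.Adj v.1 w.1
    · rw [hadjA _ _ hadj']; norm_num
    · rw [hnonadj _ _ hne hadj']; norm_num
  -- mulVec preserves integrality
  have hmulint : ∀ (c : {v : V // v ≠ u} → ℚ), (∀ w, ∃ m : ℤ, c w = (m : ℚ)) →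
      ∀ v, ∃ m : ℤ, B'.mulVec c v = (m : ℚ) := by
    intro c hc v
    have hterm : ∀ w : {v : V // v ≠ u}, ∃ m : ℤ, B' v w * c w = (m : ℚ) := by
      intro w
      obtain ⟨m1, h1⟩ := hBint v.1 w.1
      obtain ⟨m2, h2⟩ := hc w
      refine ⟨m1 * m2, ?_⟩
      rw [hB'app, h1, h2]
      push_cast
      ring
    choose m hm using hterm
    refine ⟨∑ w, m w, ?_⟩
    have : B'.mulVec c v = ∑ w, B' v w * c w := rfl
    rw [this]
    push_cast
    exact Finset.sum_congr rfl fun w _ => hm w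
  -- Part 2
  have hpart2 : ∀ y : {v : V // v ≠ u} → ℚ,
      memLipman (fun v w => B'⁻¹ v w) y →
      (∀ v, ∃ m : ℤ, y v - πs v = (m : ℚ)) → ∀ v, πs v ≤ y v := by
    intro y hy hint v0
    obtain ⟨ny, hny⟩ := (memLipman_iff B' hB'T hdetB' y).1 hy
    set l : {v : V // v ≠ u} → ℚ := fun v => max 0 (πs v - y v) with hldef
    have hl0 : ∀ v, 0 ≤ l v := fun v => le_max_left _ _
    have hlub : ∀ v, πs v - y v ≤ l v := fun v => le_max_right _ _
    have hlint : ∀ v, ∃ m : ℤ, l v = (m : ℚ) := by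
      intro v
      obtain ⟨m, hm⟩ := hint v
      rcases le_total (πs v - y v) 0 with hc | hc
      · exact ⟨0, by rw [hldef]; simp [max_eq_left hc]⟩
      · refine ⟨-m, ?_⟩
        rw [hldef]
        simp only
        rw [max_eq_right hc]
        push_cast
        linarith
    set z : {v : V // v ≠ u} → ℚ := fun v => πs v - l v with hzdef
    have hzle : ∀ w, z w ≤ πs w := fun w => by
      simp only [hzdef]; linarith [hl0 w]
    have hzley : ∀ w, z w ≤ y w := fun w => by
      simp only [hzdef]; linarith [hlub w]
    -- comparison lemma
    have hcomp : ∀ (c : {v : V // v ≠ u} → ℚ) (v : {v : V // v ≠ u}),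
        (∀ w, z w ≤ c w) → z v = c v → B'.mulVec c v ≤ B'.mulVec z v := by
      intro c v hzc hzv
      have h1 : B'.mulVec c v = ∑ w, B' v w * c w := rfl
      have h2 : B'.mulVec z v = ∑ w, B' v w * z w := rfl
      rw [h1, h2]
      refine Finset.sum_le_sum fun w _ => ?_
      by_cases hw : w = v
      · subst hw
        rw [hzv]
      · exact mul_le_mul_of_nonpos_left (hzc w) (hoff v w fun h => hw h.symm)
    -- z = πs - l, as vectors
    have hzsub : ∀ v, B'.mulVec z v = B'.mulVec πs v - B'.mulVec l v := by
      intro v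
      have h : z = πs - l := rfl
      rw [h, Matrix.mulVec_sub]
      rfl
    -- the coefficient vector of z is integral
    have hzint : ∀ v, ∃ m : ℤ, B'.mulVec z v = (m : ℚ) := by
      intro v
      obtain ⟨m, hm⟩ := hmulint l hlint v
      refine ⟨(ns v.1 : ℤ) - m, ?_⟩
      rw [hzsub v, hproj v, hm]
      push_cast
      ring
    -- the coefficient vector of z is a natural number vector
    have hznn : ∀ v, ∃ k : ℕ, B'.mulVec z v = (k : ℚ) := by
      intro v
      obtain ⟨m, hm⟩ := hzint v
      have hge : 0 ≤ B'.mulVec z v := by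
        rcases le_total (πs v) (y v) with hc | hc
        · have hzv : z v = πs v := by
            simp only [hzdef, hldef]
            rw [max_eq_left (by linarith)]
            ring
          have hc2 := hcomp πs v hzle hzv
          have h0 : 0 ≤ B'.mulVec πs v := by rw [hproj v]; positivity
          linarith
        · have hzv : z v = y v := by
            simp only [hzdef, hldef]
            rw [max_eq_right (by linarith)]
            ring
          have hc2 := hcomp y v hzley hzv
          have h0 : 0 ≤ B'.mulVec y v := by
            rw [congrFun hny v]
            positivity
          linarith
      have h0' : (0 : ℤ) ≤ m := by
        rw [hm] at hge
        exact_mod_cast hge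
      refine ⟨m.toNat, ?_⟩
      rw [hm]
      exact_mod_cast (congrArg (fun j : ℤ => (j : ℚ)) (Int.toNat_of_nonneg h0')).symm
    -- the modified element st = s - ext0 l
    set st : V → ℚ := fun v => s v - ext0 u l v with hstdef
    have hw0u : w0 ≠ u := hadj.ne'
    have hextu : B.mulVec (ext0 u l) u = - l ⟨w0, hw0u⟩ := by
      rw [mulVec_ext0]
      rw [Finset.sum_eq_single (⟨w0, hw0u⟩ : {v : V // v ≠ u})]
      · have hB1 : B u w0 = -1 := by
          show ((A u w0 : ℤ) : ℚ) = -1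
          rw [hadjA u w0 hadj]
          norm_num
        rw [hB1]
        ring
      · intro b _ hb
        have hb1 : A u b.1 = 0 := by
          apply hnonadj u b.1 (Ne.symm b.2)
          intro hadj2
          exact hb (Subtype.ext (hleaf b.1 hadj2))
        have hB0 : B u b.1 = 0 := by
          show ((A u b.1 : ℤ) : ℚ) = 0
          rw [hb1]
          norm_num
        rw [hB0, zero_mul]
      · intro h
        exact absurd (Finset.mem_univ _) h
    have hextv : ∀ v : {v : V // v ≠ u}, B.mulVec (ext0 u l) v.1 = B'.mulVec l v := by
      intro v
      rw [mulVec_ext0]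
      rfl
    have hsubst : ∀ v, B.mulVec st v = B.mulVec s v - B.mulVec (ext0 u l) v := by
      intro v
      have h : st = s - ext0 u l := rfl
      rw [h, Matrix.mulVec_sub]
      rfl
    have hstS : memLipman (fun v w => B⁻¹ v w) st := by
      rw [memLipman_iff B hBT hdetB]
      have hnat : ∀ v, ∃ k : ℕ, B.mulVec st v = (k : ℚ) := by
        intro v
        by_cases hv : v = u
        · subst hv
          rw [hsubst v, hextu, congrFun hns v]
          obtain ⟨m, hm⟩ := hlint ⟨w0, hw0u⟩
          have h0 : (0 : ℚ) ≤ (m : ℚ) := hm ▸ hl0 _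
          have h0' : (0 : ℤ) ≤ m := by exact_mod_cast h0
          refine ⟨ns v + m.toNat, ?_⟩
          rw [hm]
          have hcast : ((m.toNat : ℕ) : ℚ) = (m : ℚ) := by
            exact_mod_cast Int.toNat_of_nonneg h0'
          push_cast
          rw [hcast]
          ring
        · obtain ⟨k, hk⟩ := hznn ⟨v, hv⟩
          refine ⟨k, ?_⟩
          rw [hsubst v, hextv ⟨v, hv⟩, congrFun hns v, ← hk, hzsub ⟨v, hv⟩, hproj ⟨v, hv⟩]
      choose k hk using hnat
      exact ⟨k, funext hk⟩
    have hstint : ∀ v, ∃ m : ℤ, st v - s v = (m : ℚ) := by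
      intro v
      by_cases hv : v = u
      · subst hv
        exact ⟨0, by simp [hstdef, ext0]⟩
      · obtain ⟨m, hm⟩ := hlint ⟨v, hv⟩
        refine ⟨-m, ?_⟩
        have he : ext0 u l v = l ⟨v, hv⟩ := ext0_apply u l ⟨v, hv⟩
        simp only [hstdef]
        rw [he, hm]
        push_cast
        ring
    have hfin := hmin st hstS hstint v0.1
    have hfin' : s v0.1 ≤ s v0.1 - l v0 := by
      have he : ext0 u l v0.1 = l v0 := ext0_apply u l v0
      simp only [hstdef] at hfin
      rw [he] at hfin
      exact hfin
    have hlneg : l v0 ≤ 0 := by linarith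
    have := hlub v0
    linarith
  -- Part 3: uniqueness
  refine ⟨hpart1, hpart2, ?_⟩
  intro z hz hzint hzmin
  have h1 : ∀ v, πs v ≤ z v := hpart2 z hz hzint
  have h2 : ∀ v, z v ≤ πs v := by
    refine hzmin πs hpart1 fun v => ?_
    obtain ⟨m, hm⟩ := hzint v
    exact ⟨-m, by push_cast; linarith⟩
  funext v
  exact le_antisymm (h2 v) (h1 v)
end

section
/- Let T be a finite tree with vertex set V and let N = {v : δ_v ≥ 3} be its nodes. Define the orbifold graph T^orb on N by connecting two nodes iff they are joined in T by a path whose interior vertices all have degree 2. Let N_tree be the set of nonempty J ⊆ N such that T^orb_J is a subtree of T^orb. Then: (a) for every nonempty I ⊆ N, the set J = Ī ∩ N is the minimal element of N_tree containing I, where Ī is the vertex set of the minimal subtree of T containing I; and (b) the nonempty subsets of N decompose as the disjoint union over J ∈ N_tree of {I : E_J ⊆ I ⊆ J}, where E_J is the set of end-vertices of T^orb_J (with E_J = J when |J| = 1). -/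
open scoped Classical
set_option linter.unusedSectionVars false

variable {V : Type*} [Fintype V]

/-- The nodes of `T`: vertices of degree at least 3. -/
abbrev Nodes (G : SimpleGraph V) [DecidableRel G.Adj] : Type _ :=
  {v : V // 3 ≤ G.degree v}

/-- The orbifold graph `T^orb` on the nodes of `T`: two nodes are adjacent iff
they are joined in `T` by a path all of whose interior vertices have degree 2. -/
def orbGraph (G : SimpleGraph V) [DecidableRel G.Adj] :
    SimpleGraph (Nodes G) :=
  SimpleGraph.fromRel fun a b =>
    ∃ p : G.Walk a.1 b.1, p.IsPath ∧
      ∀ x ∈ p.support, x ≠ a.1 → x ≠ b.1 → G.degree x = 2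

/-- The vertex set `Ī ∩ N`: nodes lying in the minimal subtree of `T`
containing `I` (the union of the paths between members of `I`). -/
noncomputable def minJ (G : SimpleGraph V) [DecidableRel G.Adj]
    (I : Finset (Nodes G)) : Finset (Nodes G) :=
  Finset.univ.filter fun w =>
    ∃ a ∈ I, ∃ b ∈ I, ∃ p : G.Walk a.1 b.1, p.IsPath ∧ w.1 ∈ p.support

/-- `J ∈ N_tree`: a nonempty node set inducing a subtree of `T^orb`. -/
def NTree (G : SimpleGraph V) [DecidableRel G.Adj]
    (J : Finset (Nodes G)) : Prop :=
  J.Nonempty ∧ ((orbGraph G).induce (J : Set (Nodes G))).Connected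

/-- End vertices of the induced subgraph of `T^orb` on `J`. -/
noncomputable def endVertsOrb (G : SimpleGraph V) [DecidableRel G.Adj]
    (J : Finset (Nodes G)) : Finset (Nodes G) :=
  J.filter fun v => (J.filter fun w => (orbGraph G).Adj v w).card ≤ 1

section Helpers

variable {G : SimpleGraph V} [DecidableRel G.Adj] (hT : G.IsTree)

open SimpleGraph Walk

include hT

/-- uniqueness of paths -/
lemma uniq {a b : V} {p q : G.Walk a b} (hp : p.IsPath) (hq : q.IsPath) : p = q :=
  ((hT.existsUnique_path a b).unique hp hq)

lemma exists_path (a b : V) : ∃ p : G.Walk a b, p.IsPath :=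
  ((hT.existsUnique_path a b).exists)

lemma distlen {a b : V} {p : G.Walk a b} (hp : p.IsPath) : p.length = G.dist a b := by
  obtain ⟨q, hq⟩ := hT.isConnected.exists_walk_length_eq_dist a b
  have h1 : G.dist a b ≤ p.length := SimpleGraph.dist_le p
  have h2 : p = q.bypass := uniq hT hp q.bypass_isPath
  have h4 : p.length = q.bypass.length := by rw [h2]
  have := q.length_bypass_le
  omega

lemma distlt (a b : V) : G.dist a b < Fintype.card V := by
  obtain ⟨p, hp⟩ := exists_path hT a b
  have h1 := distlen hT hp
  have h2 : p.support.length = p.length + 1 := p.length_support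
  have h3 : p.support.length ≤ Fintype.card V := by
    classical
    have := hp.support_nodup
    simpa [List.toFinset_card_of_nodup this] using
      (Finset.card_le_univ p.support.toFinset)
  omega

end Helpers

section Helpers2

variable {G : SimpleGraph V} [DecidableRel G.Adj] (hT : G.IsTree)

open SimpleGraph Walk

include hT

/-- any path between orb-adjacent nodes has interior degree 2 -/
lemma adjPath {a b : Nodes G} (h : (orbGraph G).Adj a b) {p : G.Walk a.1 b.1}
    (hp : p.IsPath) : ∀ x ∈ p.support, x ≠ a.1 → x ≠ b.1 → G.degree x = 2 := by
  rw [orbGraph, SimpleGraph.fromRel_adj] at h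
  obtain ⟨hne, h | h⟩ := h
  · obtain ⟨q, hq, hdeg⟩ := h
    rw [uniq hT hp hq]; exact hdeg
  · obtain ⟨q, hq, hdeg⟩ := h
    have hpq : p = q.reverse := uniq hT hp hq.reverse
    rw [hpq]
    intro x hx hxa hxb
    rw [Walk.support_reverse] at hx
    exact hdeg x (by simpa using hx) hxb hxa

omit hT in
lemma interior_deg {a b : V} {p : G.Walk a b} (hp : p.IsPath) :
    ∀ x ∈ p.support, x ≠ a → x ≠ b → 2 ≤ G.degree x := by
  induction p with
  | nil => intro x hx hxa _; simp at hx; exact absurd hx hxa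
  | @cons a c b h q ih =>
    intro x hx hxa hxb
    rw [Walk.support_cons, List.mem_cons] at hx
    rcases hx with rfl | hx
    · exact absurd rfl hxa
    by_cases hxc : x = c
    · subst hxc
      cases q with
      | nil => exact absurd rfl hxb
      | @cons _ d _ h2 q' =>
        have hxd : a ≠ d := by
          rw [Walk.cons_isPath_iff] at hp
          intro hh
          subst hh
          exact hp.2 (by rw [Walk.support_cons]; exact List.mem_cons_of_mem _ q'.start_mem_support)
        have hsub : ({a, d} : Finset V) ⊆ G.neighborFinset x := by
          intro y hy
          simp only [Finset.mem_insert, Finset.mem_singleton] at hy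
          rcases hy with rfl | rfl
          · simpa [SimpleGraph.mem_neighborFinset] using h.symm
          · simpa [SimpleGraph.mem_neighborFinset] using h2
        calc 2 = ({a, d} : Finset V).card := (Finset.card_pair hxd).symm
          _ ≤ (G.neighborFinset x).card := Finset.card_le_card hsub
          _ = G.degree x := rfl
    · exact ih hp.of_cons x hx hxc hxb

omit hT in
lemma two_nbrs {c x d d2 : V} (hdeg : G.degree c ≤ 2) (h1 : G.Adj c x)
    (h2 : G.Adj c d) (h3 : G.Adj c d2) (hxd : x ≠ d) (hxd2 : x ≠ d2) : d = d2 := by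
  by_contra hne
  have hsub : ({x, d, d2} : Finset V) ⊆ G.neighborFinset c := by
    intro y hy
    simp only [Finset.mem_insert, Finset.mem_singleton] at hy
    rcases hy with rfl | rfl | rfl <;> simpa [SimpleGraph.mem_neighborFinset] using ‹G.Adj c _›
  have hcard : ({x, d, d2} : Finset V).card = 3 := by
    rw [Finset.card_insert_of_notMem (by simp [hxd, hxd2]), Finset.card_pair hne]
  have := Finset.card_le_card hsub
  rw [hcard] at this
  exact absurd (this.trans hdeg) (by norm_num)

end Helpers2

theorem SimpleGraph.Walk.getVert_cons_one {G : SimpleGraph V} {u v w : V} (q : G.Walk v w)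
    (hadj : G.Adj u v) : (q.cons hadj).getVert 1 = v := by
  cases q <;> rfl

section Helpers3

variable {G : SimpleGraph V} [DecidableRel G.Adj] (hT : G.IsTree)

open SimpleGraph Walk

omit hT in
lemma det : ∀ n : ℕ, ∀ {x u z : V} (p : G.Walk x u) (q : G.Walk x z),
    p.length ≤ n → p.IsPath → q.IsPath →
    (∀ w ∈ p.support, w ≠ x → w ≠ u → G.degree w ≤ 2) →
    (∀ w ∈ q.support, w ≠ x → w ≠ z → G.degree w ≤ 2) →
    3 ≤ G.degree u → 3 ≤ G.degree z → p.getVert 1 = q.getVert 1 → u = z := by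
  intro n
  induction n with
  | zero =>
    intro x u z p q hlen hp hq _ _ _ _ hgv
    cases p with
    | nil =>
      cases q with
      | nil => rfl
      | @cons _ c2 _ h2 q' =>
        rw [Walk.getVert_cons_one] at hgv
        have : (Walk.nil : G.Walk x x).getVert 1 = x := rfl
        rw [this] at hgv
        exact absurd hgv h2.ne
    | cons h p' => rw [Walk.length_cons] at hlen; omega
  | succ n ih =>
    intro x u z p q hlen hp hq Hp Hq hu3 hz3 hgv
    cases p with
    | nil =>
      cases q with
      | nil => rfl
      | @cons _ c2 _ h2 q' =>
        rw [Walk.getVert_cons_one] at hgv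
        have : (Walk.nil : G.Walk x x).getVert 1 = x := rfl
        rw [this] at hgv
        exact absurd hgv h2.ne
    | @cons _ c _ h p' =>
      cases q with
      | nil =>
        rw [Walk.getVert_cons_one] at hgv
        have : (Walk.nil : G.Walk x x).getVert 1 = x := rfl
        rw [this] at hgv
        exact absurd hgv.symm h.ne
      | @cons _ c2 _ h2 q' =>
        rw [Walk.getVert_cons_one, Walk.getVert_cons_one] at hgv
        subst hgv
        by_cases hcu : c = u
        · subst hcu
          by_contra hne
          have hcmem : c ∈ (Walk.cons h2 q').support := by
            rw [Walk.support_cons]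
            exact List.mem_cons_of_mem _ q'.start_mem_support
          have := Hq c hcmem h.ne' hne
          omega
        by_cases hcz : c = z
        · subst hcz
          by_contra hne
          have hcmem : c ∈ (Walk.cons h p').support := by
            rw [Walk.support_cons]
            exact List.mem_cons_of_mem _ p'.start_mem_support
          have := Hp c hcmem h.ne' (fun hh => hne hh.symm)
          omega
        · have hdegc : G.degree c ≤ 2 := by
            apply Hp c _ h.ne' hcu
            rw [Walk.support_cons]
            exact List.mem_cons_of_mem _ p'.start_mem_support
          cases p' with
          | nil => exact absurd rfl hcu
          | @cons _ d _ h3 p'' =>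
            cases q' with
            | nil => exact absurd rfl hcz
            | @cons _ d2 _ h4 q'' =>
              have hxd : x ≠ d := by
                intro hh; subst hh
                exact ((Walk.cons_isPath_iff _ _).mp hp).2
                  (by rw [Walk.support_cons]; exact List.mem_cons_of_mem _ p''.start_mem_support)
              have hxd2 : x ≠ d2 := by
                intro hh; subst hh
                exact ((Walk.cons_isPath_iff _ _).mp hq).2
                  (by rw [Walk.support_cons]; exact List.mem_cons_of_mem _ q''.start_mem_support)
              have hdd : d = d2 := two_nbrs hdegc h.symm h3 h4 hxd hxd2
              apply ih (Walk.cons h3 p'') (Walk.cons h4 q'')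
              · rw [Walk.length_cons, Walk.length_cons] at hlen
                rw [Walk.length_cons]
                omega
              · exact hp.of_cons
              · exact hq.of_cons
              · intro w hw hwc hwu
                apply Hp w (by rw [Walk.support_cons]; exact List.mem_cons_of_mem _ hw) _ hwu
                intro hh; subst hh
                exact ((Walk.cons_isPath_iff _ _).mp hp).2 hw
              · intro w hw hwc hwz
                apply Hq w (by rw [Walk.support_cons]; exact List.mem_cons_of_mem _ hw) _ hwz
                intro hh; subst hh
                exact ((Walk.cons_isPath_iff _ _).mp hq).2 hw
              · exact hu3
              · exact hz3
              · rw [Walk.getVert_cons_one, Walk.getVert_cons_one, hdd]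

end Helpers3

section Helpers4

variable {G : SimpleGraph V} [DecidableRel G.Adj] (hT : G.IsTree)

open SimpleGraph Walk

include hT

lemma nbr_fst {v u z : Nodes G} (hu : (orbGraph G).Adj v u) (hz : (orbGraph G).Adj v z)
    (hne : u ≠ z) {p : G.Walk v.1 u.1} {q : G.Walk v.1 z.1}
    (hp : p.IsPath) (hq : q.IsPath) : p.getVert 1 ≠ q.getVert 1 := by
  intro hgv
  have h1 := adjPath hT hu hp
  have h2 := adjPath hT hz hq
  have := det p.length p q le_rfl hp hq
    (fun w hw hw1 hw2 => le_of_eq (h1 w hw hw1 hw2))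
    (fun w hw hw1 hw2 => le_of_eq (h2 w hw hw1 hw2)) u.2 z.2 hgv
  exact hne (Subtype.ext this)

lemma disj_of_fst_ne {v x y : V} {r : G.Walk v x} {s : G.Walk v y}
    (hr : r.IsPath) (hs : s.IsPath) (hgv : r.getVert 1 ≠ s.getVert 1) :
    ∀ w ∈ r.support, w ∈ s.support → w = v := by
  intro w hwr hws
  by_contra hwv
  cases r with
  | nil => simp at hwr; exact hwv hwr
  | @cons _ c _ h r' =>
    cases s with
    | nil => simp at hws; exact hwv hws
    | @cons _ c2 _ h2 s' =>
      have hwr' : w ∈ r'.support := by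
        rw [Walk.support_cons, List.mem_cons] at hwr
        rcases hwr with rfl | hwr
        · exact absurd rfl hwv
        · exact hwr
      have hws' : w ∈ s'.support := by
        rw [Walk.support_cons, List.mem_cons] at hws
        rcases hws with rfl | hws
        · exact absurd rfl hwv
        · exact hws
      have ht1 : (Walk.cons h (r'.takeUntil w hwr')).IsPath := by
        rw [Walk.cons_isPath_iff]
        refine ⟨hr.of_cons.takeUntil _, fun hmem => ?_⟩
        exact ((Walk.cons_isPath_iff _ _).mp hr).2 (Walk.support_takeUntil_subset _ _ hmem)
      have ht2 : (Walk.cons h2 (s'.takeUntil w hws')).IsPath := by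
        rw [Walk.cons_isPath_iff]
        refine ⟨hs.of_cons.takeUntil _, fun hmem => ?_⟩
        exact ((Walk.cons_isPath_iff _ _).mp hs).2 (Walk.support_takeUntil_subset _ _ hmem)
      have heq := uniq hT ht1 ht2
      apply hgv
      rw [Walk.getVert_cons_one, Walk.getVert_cons_one]
      have g1 : (Walk.cons h (r'.takeUntil w hwr')).getVert 1 = c :=
        Walk.getVert_cons_one _ h
      have g2 : (Walk.cons h2 (s'.takeUntil w hws')).getVert 1 = c2 :=
        Walk.getVert_cons_one _ h2
      rw [← g1, ← g2, heq]

omit hT in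
lemma app_path {a b c : V} {p : G.Walk a b} {q : G.Walk b c} (hp : p.IsPath) (hq : q.IsPath)
    (hmeet : ∀ w ∈ p.support, w ∈ q.support → w = b) : (p.append q).IsPath := by
  rw [Walk.isPath_def, Walk.support_append]
  have hq' := hq.support_nodup
  rw [q.support_eq_cons] at hq'
  apply List.Nodup.append hp.support_nodup hq'.of_cons
  intro w hw1 hw2
  have hwb : w = b := hmeet w hw1 (List.mem_of_mem_tail hw2)
  subst hwb
  exact (List.nodup_cons.mp hq').1 hw2

omit hT in
lemma getVert_one_append {a b c : V} (p : G.Walk a b) (q : G.Walk b c) (hab : a ≠ b) :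
    (p.append q).getVert 1 = p.getVert 1 := by
  cases p with
  | nil => exact absurd rfl hab
  | cons h p' =>
    rw [Walk.cons_append, Walk.getVert_cons_one, Walk.getVert_cons_one]

end Helpers4

section Helpers5

variable {G : SimpleGraph V} [DecidableRel G.Adj] (hT : G.IsTree)

open SimpleGraph Walk

omit hT in
lemma nb {a b : Nodes G} (hab : a ≠ b) {p : G.Walk a.1 b.1} (hp : p.IsPath)
    (hno : ∀ x ∈ p.support, x ≠ a.1 → x ≠ b.1 → ¬ 3 ≤ G.degree x) :
    (orbGraph G).Adj a b := by
  rw [orbGraph, SimpleGraph.fromRel_adj]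
  refine ⟨hab, Or.inl ⟨p, hp, fun x hx hxa hxb => ?_⟩⟩
  have h2 := interior_deg hp x hx hxa hxb
  have h3 := hno x hx hxa hxb
  omega

omit hT in
lemma reach_mono {S S' : Set (Nodes G)} (hss : S ⊆ S') {x y : Nodes G}
    (hx : x ∈ S) (hy : y ∈ S)
    (h : ((orbGraph G).induce S).Reachable ⟨x, hx⟩ ⟨y, hy⟩) :
    ((orbGraph G).induce S').Reachable ⟨x, hss hx⟩ ⟨y, hss hy⟩ :=
  h.map (SimpleGraph.induceHomOfLE _ hss).toHom

include hT in
lemma reach : ∀ n : ℕ, ∀ (a b : Nodes G) (p : G.Walk a.1 b.1), p.IsPath → p.length ≤ n →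
    ((orbGraph G).induce {w : Nodes G | w.1 ∈ p.support}).Reachable
      ⟨a, p.start_mem_support⟩ ⟨b, p.end_mem_support⟩ := by
  intro n
  induction n with
  | zero =>
    intro a b p hp hlen
    have hab : a = b := Subtype.ext (Walk.eq_of_length_eq_zero (Nat.le_zero.mp hlen))
    subst hab
    exact Reachable.refl _
  | succ n ih =>
    intro a b p hp hlen
    by_cases hex : ∃ x ∈ p.support, x ≠ a.1 ∧ x ≠ b.1 ∧ 3 ≤ G.degree x
    · obtain ⟨x, hx, hxa, hxb, h3⟩ := hex
      set c : Nodes G := ⟨x, h3⟩ with hc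
      have hsplit := p.take_spec hx
      have hlen2 : (p.takeUntil x hx).length + (p.dropUntil x hx).length = p.length := by
        rw [← Walk.length_append, hsplit]
      have hlen3 : 1 ≤ (p.takeUntil x hx).length := by
        by_contra hh
        exact hxa (Walk.eq_of_length_eq_zero (p := p.takeUntil x hx) (by omega)).symm
      have hlen4 : 1 ≤ (p.dropUntil x hx).length := by
        by_contra hh
        exact hxb (Walk.eq_of_length_eq_zero (p := p.dropUntil x hx) (by omega))
      have hb1 : (p.takeUntil x hx).length ≤ n := by omega
      have hb2 : (p.dropUntil x hx).length ≤ n := by omega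
      have r1 := ih a c (p.takeUntil x hx) (hp.takeUntil hx) hb1
      have r2 := ih c b (p.dropUntil x hx) (hp.dropUntil hx) hb2
      have m1 : {w : Nodes G | w.1 ∈ (p.takeUntil x hx).support} ⊆
          {w : Nodes G | w.1 ∈ p.support} :=
        fun w hw => Walk.support_takeUntil_subset _ _ hw
      have m2 : {w : Nodes G | w.1 ∈ (p.dropUntil x hx).support} ⊆
          {w : Nodes G | w.1 ∈ p.support} :=
        fun w hw => Walk.support_dropUntil_subset _ _ hw
      exact (reach_mono m1 _ _ r1).trans (reach_mono m2 _ _ r2)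
    · push_neg at hex
      by_cases hab : a = b
      · subst hab; exact Reachable.refl _
      · have hadj : (orbGraph G).Adj a b := nb hab hp (fun x hx hxa hxb => by have := hex x hx hxa hxb; omega)
        exact SimpleGraph.Adj.reachable hadj

end Helpers5

section Helpers6

variable {G : SimpleGraph V} [DecidableRel G.Adj] (hT : G.IsTree)

open SimpleGraph Walk

include hT

lemma l5a : ∀ n : ℕ, ∀ (c e : Nodes G) (r : G.Walk c.1 e.1), r.IsPath → r.length ≤ n → c ≠ e →
    ∃ u : Nodes G, u.1 ∈ r.support ∧ u ≠ c ∧ (orbGraph G).Adj c u := by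
  intro n
  induction n with
  | zero =>
    intro c e r _ hlen hce
    exact absurd (Subtype.ext (Walk.eq_of_length_eq_zero (Nat.le_zero.mp hlen))) hce
  | succ n ih =>
    intro c e r hr hlen hce
    by_cases hex : ∃ x ∈ r.support, x ≠ c.1 ∧ x ≠ e.1 ∧ 3 ≤ G.degree x
    · obtain ⟨x, hx, hxc, hxe, h3⟩ := hex
      have hsplit := r.take_spec hx
      have hlen2 : (r.takeUntil x hx).length + (r.dropUntil x hx).length = r.length := by
        rw [← Walk.length_append, hsplit]
      have hlen4 : 1 ≤ (r.dropUntil x hx).length := by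
        by_contra hh
        exact hxe (Walk.eq_of_length_eq_zero (p := r.dropUntil x hx) (by omega))
      obtain ⟨u, hu1, hu2, hu3⟩ := ih c ⟨x, h3⟩ (r.takeUntil x hx) (hr.takeUntil hx)
        (by omega) (fun hh => hxc (congrArg Subtype.val hh).symm)
      exact ⟨u, Walk.support_takeUntil_subset _ _ hu1, hu2, hu3⟩
    · push_neg at hex
      refine ⟨e, r.end_mem_support, fun hh => hce hh.symm, ?_⟩
      exact nb hce hr (fun x hx hxa hxb => by have := hex x hx hxa hxb; omega)

lemma l5 {a b w : Nodes G} {p : G.Walk a.1 b.1} (hp : p.IsPath) (hw : w.1 ∈ p.support)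
    (hwa : w ≠ a) (hwb : w ≠ b) :
    ∃ u z : Nodes G, u.1 ∈ p.support ∧ z.1 ∈ p.support ∧ u ≠ z ∧
      (orbGraph G).Adj w u ∧ (orbGraph G).Adj w z := by
  have hval_a : w.1 ≠ a.1 := fun hh => hwa (Subtype.ext hh)
  have hval_b : w.1 ≠ b.1 := fun hh => hwb (Subtype.ext hh)
  obtain ⟨u, hu1, hu2, hu3⟩ := l5a hT (p.takeUntil w.1 hw).reverse.length w a
    (p.takeUntil w.1 hw).reverse ((hp.takeUntil hw).reverse) le_rfl hwa
  obtain ⟨z, hz1, hz2, hz3⟩ := l5a hT (p.dropUntil w.1 hw).length w b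
    (p.dropUntil w.1 hw) (hp.dropUntil hw) le_rfl hwb
  rw [Walk.support_reverse, List.mem_reverse] at hu1
  have huz : u ≠ z := by
    intro hh
    subst hh
    have hnodup := hp.support_nodup
    rw [← p.take_spec hw, Walk.support_append] at hnodup
    have hdisj := (List.nodup_append.mp hnodup).2.2
    have huval : u.1 ≠ w.1 := fun hh2 => hu2 (Subtype.ext hh2)
    have htail : u.1 ∈ (p.dropUntil w.1 hw).support.tail := by
      have := (p.dropUntil w.1 hw).support_eq_cons
      rw [this] at hz1
      rcases List.mem_cons.mp hz1 with hh2 | hh2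
      · exact absurd hh2 huval
      · exact hh2
    exact hdisj _ hu1 _ htail rfl
  exact ⟨u, z, Walk.support_takeUntil_subset _ _ hu1,
    Walk.support_dropUntil_subset _ _ hz1, huz, hu3, hz3⟩

end Helpers6

section Helpers7

variable {G : SimpleGraph V} [DecidableRel G.Adj] (hT : G.IsTree)

open SimpleGraph Walk

omit hT in
lemma orbwalk_to_walk {J' : Finset (Nodes G)} :
    ∀ {x y : ↥(J' : Set (Nodes G))}
      (_ : ((orbGraph G).induce (J' : Set (Nodes G))).Walk x y),
    ∃ q : G.Walk x.1.1 y.1.1,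
      ∀ v ∈ q.support, ∀ h3 : 3 ≤ G.degree v, (⟨v, h3⟩ : Nodes G) ∈ J' := by
  intro x y ow
  induction ow with
  | nil =>
    rename_i u
    refine ⟨Walk.nil, fun v hv h3 => ?_⟩
    simp only [Walk.support_nil, List.mem_singleton] at hv
    have : (⟨v, h3⟩ : Nodes G) = u.1 := Subtype.ext hv
    rw [this]
    exact u.2
  | @cons x c y hadj ow' ih =>
    obtain ⟨q', hq'⟩ := ih
    have hadj' : (orbGraph G).Adj x.1 c.1 := hadj
    rw [orbGraph, SimpleGraph.fromRel_adj] at hadj'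
    obtain ⟨hne, hcase⟩ := hadj'
    have hr : ∃ r : G.Walk x.1.1 c.1.1,
        ∀ t ∈ r.support, t ≠ x.1.1 → t ≠ c.1.1 → G.degree t = 2 := by
      rcases hcase with ⟨r, _, hdeg⟩ | ⟨r, _, hdeg⟩
      · exact ⟨r, hdeg⟩
      · exact ⟨r.reverse, fun t ht ht1 ht2 => by
          rw [Walk.support_reverse, List.mem_reverse] at ht
          exact hdeg t ht ht2 ht1⟩
    obtain ⟨r, hrdeg⟩ := hr
    refine ⟨r.append q', fun v hv h3 => ?_⟩
    rw [Walk.mem_support_append_iff] at hv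
    rcases hv with hv | hv
    · by_cases hvx : v = x.1.1
      · have : (⟨v, h3⟩ : Nodes G) = x.1 := Subtype.ext hvx
        rw [this]; exact x.2
      · by_cases hvc : v = c.1.1
        · have : (⟨v, h3⟩ : Nodes G) = c.1 := Subtype.ext hvc
          rw [this]; exact c.2
        · have := hrdeg v hv hvx hvc
          omega
    · exact hq' v hv h3

end Helpers7

section Helpers8

variable {G : SimpleGraph V} [DecidableRel G.Adj] (hT : G.IsTree)

open SimpleGraph Walk

include hT

lemma path_len_lt {a b : V} {p : G.Walk a b} (hp : p.IsPath) : p.length < Fintype.card V := by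
  have h2 : p.support.length = p.length + 1 := p.length_support
  have h3 : p.support.length ≤ Fintype.card V := by
    classical
    have := hp.support_nodup
    simpa [List.toFinset_card_of_nodup this] using (Finset.card_le_univ p.support.toFinset)
  omega

lemma side {J' I : Finset (Nodes G)} (hE : endVertsOrb G J' ⊆ I) :
    ∀ n : ℕ, ∀ (w u : Nodes G) (v0 m : V) (p₀ : G.Walk v0 w.1) (r : G.Walk w.1 u.1),
    w ∈ J' → u ∈ J' → (orbGraph G).Adj w u → (p₀.append r).IsPath →
    m ∈ (p₀.append r).support →
    Fintype.card V ≤ n + (p₀.append r).length →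
    ∃ x ∈ I, ∃ P : G.Walk v0 x.1, P.IsPath ∧ m ∈ P.support := by
  intro n
  induction n with
  | zero =>
    intro w u v0 m p₀ r _ _ _ hP _ hfuel
    have := path_len_lt hT hP
    omega
  | succ n ih =>
    intro w u v0 m p₀ r hw hu hadj hP hm hfuel
    by_cases hui : u ∈ I
    · exact ⟨u, hui, p₀.append r, hP, hm⟩
    · have hune : 1 < (J'.filter fun t => (orbGraph G).Adj u t).card := by
        by_contra hh
        exact hui (hE (Finset.mem_filter.mpr ⟨hu, by omega⟩))
      obtain ⟨u', hu'f, hu'w⟩ := Finset.exists_mem_ne hune w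
      obtain ⟨hu'J, hu'adj⟩ := Finset.mem_filter.mp hu'f
      obtain ⟨q, hq⟩ := exists_path hT u.1 u'.1
      have hrpath : r.IsPath := hP.of_append_right
      have hwu : w.1 ≠ u.1 := fun hh => hadj.ne (Subtype.ext hh)
      have huu' : u.1 ≠ u'.1 := fun hh => hu'adj.ne (Subtype.ext hh)
      have hrev1 : (p₀.append r).reverse.getVert 1 = r.reverse.getVert 1 := by
        rw [Walk.reverse_append]
        exact getVert_one_append _ _ (fun hh => hwu hh.symm)
      have hgv : (p₀.append r).reverse.getVert 1 ≠ q.getVert 1 := by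
        rw [hrev1]
        exact nbr_fst hT hadj.symm hu'adj (fun hh => hu'w (hh.symm)) hrpath.reverse hq
      have hmeet := disj_of_fst_ne hT hP.reverse hq hgv
      have hP' : ((p₀.append r).append q).IsPath := by
        apply app_path hP hq
        intro t ht htq
        apply hmeet t _ htq
        rw [Walk.support_reverse, List.mem_reverse]
        exact ht
      have hm' : m ∈ ((p₀.append r).append q).support := by
        rw [Walk.mem_support_append_iff]; left; exact hm
      have hq1 : 1 ≤ q.length := by
        by_contra hh
        exact huu' (Walk.eq_of_length_eq_zero (p := q) (by omega))
      have hfuel' : Fintype.card V ≤ n + ((p₀.append r).append q).length := by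
        rw [Walk.length_append]
        rw [Walk.length_append] at hfuel ⊢
        omega
      exact ih u u' v0 m (p₀.append r) q hu hu'J hu'adj hP' hm' hfuel'

end Helpers8

section Final

variable {G : SimpleGraph V} [DecidableRel G.Adj]

open SimpleGraph Walk

lemma mem_minJ {I : Finset (Nodes G)} {w : Nodes G} :
    w ∈ minJ G I ↔ ∃ a ∈ I, ∃ b ∈ I, ∃ p : G.Walk a.1 b.1, p.IsPath ∧ w.1 ∈ p.support := by
  simp [minJ]

lemma I_subset_minJ {I : Finset (Nodes G)} : I ⊆ minJ G I := by
  intro a ha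
  exact mem_minJ.mpr ⟨a, ha, a, ha, Walk.nil, Walk.IsPath.nil, Walk.start_mem_support _⟩

variable (hT : G.IsTree)
include hT

lemma minJ_ntree {I : Finset (Nodes G)} (hI : I.Nonempty) : NTree G (minJ G I) := by
  obtain ⟨a0, ha0⟩ := hI
  have ha0J : a0 ∈ minJ G I := I_subset_minJ ha0
  refine ⟨⟨a0, ha0J⟩, ?_⟩
  have key : ∀ (w : Nodes G) (hw : w ∈ minJ G I),
      ((orbGraph G).induce ((minJ G I : Finset (Nodes G)) : Set (Nodes G))).Reachable
        ⟨w, hw⟩ ⟨a0, ha0J⟩ := by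
    intro w hw
    obtain ⟨a, ha, b, hb, p, hp, hwp⟩ := mem_minJ.mp hw
    have haJ : a ∈ minJ G I := I_subset_minJ ha
    -- reach from a to w along takeUntil
    have sub1 : {t : Nodes G | t.1 ∈ (p.takeUntil w.1 hwp).support} ⊆
        ((minJ G I : Finset (Nodes G)) : Set (Nodes G)) := by
      intro t ht
      exact mem_minJ.mpr ⟨a, ha, b, hb, p, hp, Walk.support_takeUntil_subset _ _ ht⟩
    have r1 := reach hT (p.takeUntil w.1 hwp).length a w (p.takeUntil w.1 hwp)
      (hp.takeUntil hwp) le_rfl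
    have r1' := reach_mono sub1 _ _ r1
    -- reach from a to a0
    obtain ⟨p2, hp2⟩ := exists_path hT a.1 a0.1
    have sub2 : {t : Nodes G | t.1 ∈ p2.support} ⊆
        ((minJ G I : Finset (Nodes G)) : Set (Nodes G)) := by
      intro t ht
      exact mem_minJ.mpr ⟨a, ha, a0, ha0, p2, hp2, ht⟩
    have r2 := reach hT p2.length a a0 p2 hp2 le_rfl
    have r2' := reach_mono sub2 _ _ r2
    exact (r1'.symm).trans r2'
  rw [SimpleGraph.connected_iff]
  refine ⟨fun x y => ?_, ⟨⟨a0, ha0J⟩⟩⟩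
  obtain ⟨x, hx⟩ := x
  obtain ⟨y, hy⟩ := y
  exact (key x hx).trans (key y hy).symm

lemma minJ_min {I J' : Finset (Nodes G)} (hJ' : NTree G J') (hIJ' : I ⊆ J') :
    minJ G I ⊆ J' := by
  intro w hw
  obtain ⟨a, ha, b, hb, p, hp, hwp⟩ := mem_minJ.mp hw
  have haJ : a ∈ J' := hIJ' ha
  have hbJ : b ∈ J' := hIJ' hb
  have hreach := hJ'.2.preconnected ⟨a, haJ⟩ ⟨b, hbJ⟩
  obtain ⟨ow⟩ := hreach
  obtain ⟨q, hq⟩ := orbwalk_to_walk ow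
  have hpq : p.support ⊆ q.support := by
    have : p = q.bypass := uniq hT hp q.bypass_isPath
    rw [this]
    exact q.support_bypass_subset
  have := hq w.1 (hpq hwp) w.2
  simpa using this

lemma minJ_ends {I : Finset (Nodes G)} : endVertsOrb G (minJ G I) ⊆ I := by
  intro v hv
  rw [endVertsOrb, Finset.mem_filter] at hv
  obtain ⟨hvJ, hcard⟩ := hv
  by_contra hvI
  obtain ⟨a, ha, b, hb, p, hp, hvp⟩ := mem_minJ.mp hvJ
  have hva : v ≠ a := fun hh => hvI (hh ▸ ha)
  have hvb : v ≠ b := fun hh => hvI (hh ▸ hb)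
  obtain ⟨u, z, hu1, hz1, huz, hadju, hadjz⟩ := l5 hT hp hvp hva hvb
  have huJ : u ∈ minJ G I := mem_minJ.mpr ⟨a, ha, b, hb, p, hp, hu1⟩
  have hzJ : z ∈ minJ G I := mem_minJ.mpr ⟨a, ha, b, hb, p, hp, hz1⟩
  have hsub : ({u, z} : Finset (Nodes G)) ⊆
      (minJ G I).filter fun t => (orbGraph G).Adj v t := by
    intro t ht
    rcases Finset.mem_insert.mp ht with rfl | ht
    · exact Finset.mem_filter.mpr ⟨huJ, hadju⟩
    · rw [Finset.mem_singleton] at ht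
      subst ht
      exact Finset.mem_filter.mpr ⟨hzJ, hadjz⟩
  have h2 : ({u, z} : Finset (Nodes G)).card = 2 := Finset.card_pair huz
  have := Finset.card_le_card hsub
  omega

lemma subset_minJ_of_ends {I J2 : Finset (Nodes G)} (hNT2 : NTree G J2)
    (hE2 : endVertsOrb G J2 ⊆ I) (hI2 : I ⊆ J2) : J2 ⊆ minJ G I := by
  intro v hv
  by_cases hvI : v ∈ I
  · exact I_subset_minJ hvI
  · have hvE : v ∉ endVertsOrb G J2 := fun hh => hvI (hE2 hh)
    have hcard : 1 < (J2.filter fun t => (orbGraph G).Adj v t).card := by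
      by_contra hh
      exact hvE (Finset.mem_filter.mpr ⟨hv, by omega⟩)
    have hne : (J2.filter fun t => (orbGraph G).Adj v t).Nonempty :=
      Finset.card_pos.mp (by omega)
    obtain ⟨u, huf⟩ := hne
    obtain ⟨z, hzf, hzu⟩ := Finset.exists_mem_ne hcard u
    obtain ⟨huJ, hadju⟩ := Finset.mem_filter.mp huf
    obtain ⟨hzJ, hadjz⟩ := Finset.mem_filter.mp hzf
    obtain ⟨pu, hpu⟩ := exists_path hT v.1 u.1
    obtain ⟨pz, hpz⟩ := exists_path hT v.1 z.1
    have hvu : v.1 ≠ u.1 := fun hh => hadju.ne (Subtype.ext hh)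
    have hvz : v.1 ≠ z.1 := fun hh => hadjz.ne (Subtype.ext hh)
    obtain ⟨x, hxI, Pu, hPu, huPu⟩ := side hT hE2 (Fintype.card V) v u v.1 u.1
      Walk.nil pu hv huJ hadju (by simpa using hpu)
      (by simpa using pu.end_mem_support) (by omega)
    obtain ⟨y, hyI, Pz, hPz, hzPz⟩ := side hT hE2 (Fintype.card V) v z v.1 z.1
      Walk.nil pz hv hzJ hadjz (by simpa using hpz)
      (by simpa using pz.end_mem_support) (by omega)
    obtain ⟨q1, r1, rfl⟩ := Walk.mem_support_iff_exists_append.mp huPu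
    obtain ⟨q2, r2, rfl⟩ := Walk.mem_support_iff_exists_append.mp hzPz
    have hq1 : q1.IsPath := hPu.of_append_left
    have hq2 : q2.IsPath := hPz.of_append_left
    have hgv : (q1.append r1).getVert 1 ≠ (q2.append r2).getVert 1 := by
      rw [getVert_one_append _ _ hvu, getVert_one_append _ _ hvz]
      exact nbr_fst hT hadju hadjz (fun hh => hzu hh.symm) hq1 hq2
    have hmeet := disj_of_fst_ne hT hPu hPz hgv
    have hR : ((q1.append r1).reverse.append (q2.append r2)).IsPath := by
      apply app_path hPu.reverse hPz
      intro t ht htz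
      apply hmeet t _ htz
      rw [Walk.support_reverse, List.mem_reverse] at ht
      exact ht
    have hvR : v.1 ∈ ((q1.append r1).reverse.append (q2.append r2)).support := by
      rw [Walk.mem_support_append_iff]
      left
      exact (q1.append r1).reverse.end_mem_support
    exact mem_minJ.mpr ⟨x, hxI, y, hyI, _, hR, hvR⟩

end Final

/-- (a) For every nonempty set of nodes `I`, the set `J = Ī ∩ N` is the
minimal element of `N_tree` containing `I`; (b) the nonempty subsets of the
node set decompose as the disjoint union over `J ∈ N_tree` of the intervals
`{I : E_J ⊆ I ⊆ J}`, where `E_J` is the end-vertex set of `T^orb_J`. -/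
theorem stmt19 (G : SimpleGraph V) [DecidableRel G.Adj] (hT : G.IsTree)
    (I : Finset (Nodes G)) (hI : I.Nonempty) :
    (NTree G (minJ G I) ∧ I ⊆ minJ G I ∧
      ∀ J' : Finset (Nodes G), NTree G J' → I ⊆ J' → minJ G I ⊆ J')
    ∧ ∃! J : Finset (Nodes G), NTree G J ∧ endVertsOrb G J ⊆ I ∧ I ⊆ J := by
  refine ⟨⟨minJ_ntree hT hI, I_subset_minJ, fun J' hJ' hIJ' => minJ_min hT hJ' hIJ'⟩,
    ⟨minJ G I, ⟨minJ_ntree hT hI, minJ_ends hT, I_subset_minJ⟩, ?_⟩⟩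
  rintro J2 ⟨hNT2, hE2, hI2⟩
  exact le_antisymm (subset_minJ_of_ends hT hNT2 hE2 hI2) (minJ_min hT hNT2 hI2)
end
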